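/- arXiv:0809.4966 — 7 statements merged into one kernel-verified Lean document; each statement's English description precedes it below -/
import Mathlib

section
/- Fix integers n ≥ 1 and 0 ≤ k ≤ n, and set m = n − k. In ℤ[a_1,…,a_{n+k}], with the conventions a_0 = 1 and a_p = 0 for p < 0 or p > n+k, set d_r = det(a_{1+j−i})_{1≤i,j≤r} and b_r = a_r² + 2·∑_{i≥1} (−1)^i a_{r+i} a_{r−i}. Let I be the ideal generated by d_{m+1},…,d_{n+k} and b_{k+1},…,b_n. Then d_r ∈ I for every r with n+k < r ≤ 2n. -/
open MvPolynomial

/-- The element `a_p` of `ℤ[a_1,…,a_{n+k}]`, with the conventions `a_0 = 1` and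
`a_p = 0` for `p < 0` or `p > n+k`. -/
noncomputable def aGen (n k : ℕ) (p : ℤ) : MvPolynomial (Fin (n + k)) ℤ :=
  if h : 1 ≤ p ∧ p ≤ n + k then X ⟨p.toNat - 1, by omega⟩
  else if p = 0 then 1 else 0

/-- The `r × r` Schur determinant `d_r = det (a_{1+j-i})_{1 ≤ i,j ≤ r}`. -/
noncomputable def dDet (n k : ℕ) (r : ℕ) : MvPolynomial (Fin (n + k)) ℤ :=
  (Matrix.of fun i j : Fin r => aGen n k (1 + (j : ℤ) - (i : ℤ))).det

/-- `b_r = a_r² + 2·∑_{i ≥ 1} (−1)^i a_{r+i} a_{r−i}` (the sum is finite, and all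
nonzero terms occur for `1 ≤ i ≤ n+k`). -/
noncomputable def bRel (n k : ℕ) (r : ℕ) : MvPolynomial (Fin (n + k)) ℤ :=
  aGen n k r ^ 2 +
    2 * ∑ i ∈ Finset.Icc 1 (n + k),
      (-1 : MvPolynomial (Fin (n + k)) ℤ) ^ i * aGen n k (r + i) * aGen n k ((r : ℤ) - i)

open PowerSeries

lemma aGen_zero (n k : ℕ) : aGen n k 0 = 1 := by
  unfold aGen; rw [dif_neg (by omega), if_pos rfl]

lemma aGen_eq_zero (n k : ℕ) {p : ℤ} (h : p < 0 ∨ (n + k : ℤ) < p) : aGen n k p = 0 := by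
  unfold aGen; rw [dif_neg (by omega), if_neg (by omega)]

lemma dDet_zero (n k : ℕ) : dDet n k 0 = 1 := Matrix.det_fin_zero

lemma detAux (n k : ℕ) : ∀ (r : ℕ) (j : Fin (r + 1)),
    (Matrix.of fun i j' : Fin r =>
      aGen n k ((j.succAbove j' : ℤ) - (i : ℤ))).det = dDet n k (r - j) := by
  intro r
  induction r with
  | zero => intro j; rw [Matrix.det_fin_zero]; simpa using (dDet_zero n k).symm
  | succ r ih =>
    intro j
    induction j using Fin.cases with
    | zero =>
      rw [dDet]
      congr 1
      refine Matrix.ext fun i j' => ?_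
      simp only [Matrix.of_apply, Fin.zero_succAbove, Fin.val_succ]
      congr 1
      push_cast
      ring
    | succ j₀ =>
      rw [Matrix.det_succ_column_zero]
      rw [Finset.sum_eq_single 0]
      · have h0 : ((j₀.succ.succAbove 0 : Fin (r+2)) : ℤ) = 0 := by
          rw [Fin.succ_succAbove_zero]; rfl
        have e1 : (Matrix.of fun i j' : Fin (r+1) =>
            aGen n k ((j₀.succ.succAbove j' : ℤ) - (i : ℤ))) 0 0 = 1 := by
          simp [h0, aGen_zero]
        rw [e1]
        have e2 : ((Matrix.of fun i j' : Fin (r+1) =>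
            aGen n k ((j₀.succ.succAbove j' : ℤ) - (i : ℤ))).submatrix
              (Fin.succAbove 0) Fin.succ).det = dDet n k (r - j₀) := by
          rw [← ih j₀]
          congr 1
          ext i j'
          simp only [Matrix.submatrix_apply, Matrix.of_apply, Fin.zero_succAbove,
            Fin.succ_succAbove_succ, Fin.val_succ]
          congr 1
          push_cast
          ring
        rw [e2]
        have h3 : (r + 1) - (j₀.succ : ℕ) = r - j₀ := by
          rw [Fin.val_succ]; omega
        rw [h3]
        simp
      · intro i _ hi
        have h0 : ((j₀.succ.succAbove 0 : Fin (r+2)) : ℤ) = 0 := by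
          rw [Fin.succ_succAbove_zero]; rfl
        have hz : (Matrix.of fun i j' : Fin (r+1) =>
            aGen n k ((j₀.succ.succAbove j' : ℤ) - (i : ℤ))) i 0 = 0 := by
          simp only [Matrix.of_apply, h0]
          apply aGen_eq_zero
          left
          have : 0 < (i : ℕ) := Fin.pos_iff_ne_zero.mpr hi
          omega
        rw [hz]; ring
      · intro h; exact absurd (Finset.mem_univ _) h

lemma detRec (n k : ℕ) (r : ℕ) : dDet n k (r + 1) =
    ∑ j ∈ Finset.range (r + 1), (-1) ^ j * aGen n k (1 + j) * dDet n k (r - j) := by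
  rw [dDet, Matrix.det_succ_row_zero,
    ← Fin.sum_univ_eq_sum_range (fun j => (-1) ^ j * aGen n k (1 + j) * dDet n k (r - j))]
  apply Finset.sum_congr rfl
  intro j _
  have e1 : (Matrix.of fun i j' : Fin (r+1) => aGen n k (1 + (j' : ℤ) - (i : ℤ)))
      0 j = aGen n k (1 + (j:ℕ)) := by
    simp only [Matrix.of_apply]
    norm_num
  have e2 : ((Matrix.of fun i j' : Fin (r+1) => aGen n k (1 + (j' : ℤ) - (i : ℤ))).submatrix
      Fin.succ (Fin.succAbove j)).det = dDet n k (r - (j:ℕ)) := by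
    have := detAux n k r j
    rw [← this]
    congr 1
    ext i j'
    simp only [Matrix.submatrix_apply, Matrix.of_apply, Fin.val_succ]
    congr 1
    push_cast
    ring
  rw [e1, e2]

/-- The power series `A(t) = ∑ a_p t^p`. -/
noncomputable def psA (n k : ℕ) : PowerSeries (MvPolynomial (Fin (n + k)) ℤ) :=
  PowerSeries.mk fun p => aGen n k p

/-- The power series `D(t) = ∑ d_r t^r`. -/
noncomputable def psD (n k : ℕ) : PowerSeries (MvPolynomial (Fin (n + k)) ℤ) :=
  PowerSeries.mk fun r => dDet n k r

/-- The power series `C(t) = ∑ (-1)^s b_s t^{2s}`. -/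
noncomputable def psC (n k : ℕ) : PowerSeries (MvPolynomial (Fin (n + k)) ℤ) :=
  PowerSeries.mk fun u => if u % 2 = 0 then (-1) ^ (u / 2) * bRel n k (u / 2) else 0

lemma L1 (n k : ℕ) : rescale (-1) (psA n k) * psD n k = 1 := by
  apply PowerSeries.ext
  intro u
  rw [PowerSeries.coeff_mul]
  cases u with
  | zero =>
    simp [psA, psD, coeff_rescale, aGen_zero, dDet_zero]
  | succ v =>
    rw [Finset.Nat.sum_antidiagonal_eq_sum_range_succ_mk, Finset.sum_range_succ']
    simp only [psA, psD, coeff_rescale, coeff_mk]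
    have h1 : ∀ i ∈ Finset.range (v + 1),
        (-1 : MvPolynomial (Fin (n+k)) ℤ) ^ (i+1) * aGen n k ((i+1 : ℕ) : ℤ) *
          dDet n k (v + 1 - (i+1)) =
        -((-1) ^ i * aGen n k (1 + (i : ℤ)) * dDet n k (v - i)) := by
      intro i hi
      have c1 : ((i+1 : ℕ) : ℤ) = 1 + (i : ℤ) := by push_cast; ring
      have c2 : v + 1 - (i + 1) = v - i := by omega
      rw [c1, c2, pow_succ]
      ring
    rw [Finset.sum_congr rfl h1, Finset.sum_neg_distrib, ← detRec n k v]
    simp [aGen_zero, PowerSeries.coeff_one]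

/-- `b`-term helper: the summand in `bRel`. -/
noncomputable def bTerm (n k s j : ℕ) : MvPolynomial (Fin (n + k)) ℤ :=
  (-1) ^ j * aGen n k ↑(s + j) * aGen n k ((s : ℤ) - ↑j)

lemma bRel_eq (n k s : ℕ) :
    bRel n k s = aGen n k ↑s ^ 2 + 2 * ∑ j ∈ Finset.Icc 1 (n + k), bTerm n k s j := rfl

lemma bTerm_sum (n k s : ℕ) :
    ∑ j ∈ Finset.Icc 1 s, bTerm n k s j = ∑ j ∈ Finset.Icc 1 (n + k), bTerm n k s j := by
  have h1 : ∑ j ∈ Finset.Icc 1 s, bTerm n k s j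
      = ∑ j ∈ Finset.Icc 1 (s + (n + k)), bTerm n k s j := by
    apply Finset.sum_subset
    · intro j hj; simp only [Finset.mem_Icc] at *; omega
    · intro j hj hnj
      simp only [Finset.mem_Icc] at hj hnj
      have hz : aGen n k ((s : ℤ) - ↑j) = 0 := aGen_eq_zero n k (by left; omega)
      rw [bTerm, hz, mul_zero]
  have h2 : ∑ j ∈ Finset.Icc 1 (n + k), bTerm n k s j
      = ∑ j ∈ Finset.Icc 1 (s + (n + k)), bTerm n k s j := by
    apply Finset.sum_subset
    · intro j hj; simp only [Finset.mem_Icc] at *; omega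
    · intro j hj hnj
      simp only [Finset.mem_Icc] at hj hnj
      have hz : aGen n k ↑(s + j) = 0 := aGen_eq_zero n k (by right; push_cast; omega)
      rw [bTerm, hz, mul_zero, zero_mul]
  rw [h1, h2]

lemma L2 (n k : ℕ) : psA n k * rescale (-1) (psA n k) = psC n k := by
  apply PowerSeries.ext
  intro u
  rw [PowerSeries.coeff_mul]
  rw [show (PowerSeries.coeff u) (psC n k)
      = if u % 2 = 0 then (-1) ^ (u / 2) * bRel n k (u / 2) else 0 from coeff_mk u _]
  by_cases hu : u % 2 = 0
  case neg =>
    rw [if_neg hu]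
    apply Finset.sum_involution (fun pq _ => pq.swap)
    · rintro ⟨p, q⟩ hpq
      rw [Finset.HasAntidiagonal.mem_antidiagonal] at hpq
      simp only [psA, coeff_mk, coeff_rescale, Prod.swap]
      rcases Nat.even_or_odd p with hp | hp
      · have hq : Odd q := by
          rw [Nat.odd_iff]; rw [Nat.even_iff] at hp; omega
        rw [Even.neg_one_pow hp, Odd.neg_one_pow hq]
        ring
      · have hq : Even q := by
          rw [Nat.even_iff]; rw [Nat.odd_iff] at hp; omega
        rw [Even.neg_one_pow hq, Odd.neg_one_pow hp]
        ring
    · rintro ⟨p, q⟩ hpq _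
      rw [Finset.HasAntidiagonal.mem_antidiagonal] at hpq
      simp only [Prod.swap, ne_eq, Prod.mk.injEq, not_and]
      intro h; exfalso; omega
    · rintro ⟨p, q⟩ hpq
      simp
    · rintro ⟨p, q⟩ hpq
      simp only [Finset.HasAntidiagonal.mem_antidiagonal, Prod.swap_prod_mk] at hpq ⊢
      omega
  case pos =>
    rw [if_pos hu]
    obtain ⟨s, rfl⟩ : ∃ s, u = 2 * s := ⟨u / 2, by omega⟩
    rw [show 2 * s / 2 = s from by omega]
    rw [Finset.Nat.sum_antidiagonal_eq_sum_range_succ_mk]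
    simp only [psA, coeff_mk, coeff_rescale]
    set F : ℕ → MvPolynomial (Fin (n + k)) ℤ :=
      fun p => aGen n k ↑p * ((-1) ^ (2 * s - p) * aGen n k ↑(2 * s - p)) with hF
    show ∑ p ∈ Finset.range (2 * s).succ, F p = _
    rw [show (2 * s).succ = s + (s + 1) from by omega, Finset.sum_range_add,
      ← Finset.sum_range_reflect F s, Finset.sum_range_succ' (fun i => F (s + i)) s,
      ← add_assoc, ← Finset.sum_add_distrib]
    have hmain : ∀ i ∈ Finset.range s, F (s - 1 - i) + F (s + (i + 1)) =
        (-1) ^ s * 2 * bTerm n k s (1 + i) := by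
      intro i hi
      rw [Finset.mem_range] at hi
      have hA : F (s - 1 - i)
          = aGen n k ((s : ℤ) - ↑(1 + i)) * ((-1) ^ (s + (1 + i)) * aGen n k ↑(s + (1 + i))) := by
        rw [hF]
        simp only
        rw [show s - 1 - i = s - (1 + i) from by omega,
          show 2 * s - (s - (1 + i)) = s + (1 + i) from by omega,
          show ((s - (1 + i) : ℕ) : ℤ) = (s : ℤ) - ↑(1 + i) from by
            push_cast [show 1 + i ≤ s from by omega]; ring]
      have hB : F (s + (i + 1))
          = aGen n k ↑(s + (1 + i)) * ((-1) ^ (s + (1 + i)) * aGen n k ((s : ℤ) - ↑(1 + i))) := by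
        rw [hF]
        simp only
        rw [show s + (i + 1) = s + (1 + i) from by omega,
          show 2 * s - (s + (1 + i)) = s - (1 + i) from by omega,
          show ((s - (1 + i) : ℕ) : ℤ) = (s : ℤ) - ↑(1 + i) from by
            push_cast [show 1 + i ≤ s from by omega]; ring,
          show ((-1 : MvPolynomial (Fin (n + k)) ℤ)) ^ (s - (1 + i)) = (-1) ^ (s + (1 + i)) from by
            obtain ⟨d, hd⟩ : ∃ d, s = (1 + i) + d := ⟨s - (1 + i), by omega⟩
            rw [show s - (1 + i) = d from by omega,
              show s + (1 + i) = d + 2 * (1 + i) from by omega, pow_add, pow_mul]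
            norm_num]
      rw [hA, hB, bTerm, pow_add]
      ring
    rw [Finset.sum_congr rfl hmain, ← Finset.mul_sum]
    have hIcc : ∑ j ∈ Finset.Icc 1 s, bTerm n k s j
        = ∑ i ∈ Finset.range s, bTerm n k s (1 + i) := by
      rw [show Finset.Icc 1 s = Finset.Ico 1 (s + 1) from rfl, Finset.sum_Ico_eq_sum_range]
      simp
    rw [← hIcc, bTerm_sum]
    have hFs : F (s + 0) = (-1) ^ s * aGen n k ↑s ^ 2 := by
      rw [hF]
      simp only [add_zero, show 2 * s - s = s from by omega]
      ring
    rw [hFs, bRel_eq]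
    ring

lemma bRel_zero (n k : ℕ) : bRel n k 0 = 1 := by
  rw [bRel]
  rw [Finset.sum_congr rfl (fun i hi => ?_), Finset.sum_const_zero]
  · rw [Nat.cast_zero, aGen_zero]; norm_num
  · rw [Finset.mem_Icc] at hi
    have hz : aGen n k (((0 : ℕ) : ℤ) - ↑i) = 0 := aGen_eq_zero n k (by left; omega)
    rw [hz, mul_zero]

lemma keyIdentity (n k r : ℕ) : aGen n k r =
    ∑ u ∈ Finset.range (r + 1),
      (if u % 2 = 0 then (-1) ^ (u / 2) * bRel n k (u / 2) else 0) * dDet n k (r - u) := by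
  have h : psA n k = psC n k * psD n k := by
    calc psA n k = psA n k * 1 := (mul_one _).symm
    _ = psA n k * (rescale (-1) (psA n k) * psD n k) := by rw [L1]
    _ = (psA n k * rescale (-1) (psA n k)) * psD n k := by ring
    _ = psC n k * psD n k := by rw [L2]
  have h2 := congrArg (PowerSeries.coeff r) h
  rw [PowerSeries.coeff_mul, Finset.Nat.sum_antidiagonal_eq_sum_range_succ_mk] at h2
  simpa only [psA, psC, psD, coeff_mk] using h2

/-- With `m = n − k` and `I = (d_{m+1},…,d_{n+k}, b_{k+1},…,b_n)`, one has
`d_r ∈ I` for all `n+k < r ≤ 2n`. -/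
theorem dDet_mem_ideal (n k : ℕ) (hn : 1 ≤ n) (hk : k ≤ n) (r : ℕ)
    (hr₁ : n + k < r) (hr₂ : r ≤ 2 * n) :
    dDet n k r ∈ Ideal.span
      (dDet n k '' Set.Icc (n - k + 1) (n + k) ∪ bRel n k '' Set.Icc (k + 1) n) := by
  induction r using Nat.strong_induction_on with
  | _ r IH =>
  set I := Ideal.span
      (dDet n k '' Set.Icc (n - k + 1) (n + k) ∪ bRel n k '' Set.Icc (k + 1) n) with hI
  have hkey := keyIdentity n k r
  rw [aGen_eq_zero n k (by right; push_cast; omega)] at hkey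
  rw [Finset.sum_range_succ'] at hkey
  have h0 : (if 0 % 2 = 0 then ((-1 : MvPolynomial (Fin (n+k)) ℤ)) ^ (0 / 2) * bRel n k (0 / 2)
      else 0) * dDet n k (r - 0) = dDet n k r := by
    rw [if_pos rfl]
    norm_num [bRel_zero]
  rw [h0] at hkey
  have hd : dDet n k r = -∑ i ∈ Finset.range r,
      (if (i+1) % 2 = 0 then ((-1 : MvPolynomial (Fin (n+k)) ℤ)) ^ ((i+1) / 2) * bRel n k ((i+1) / 2)
        else 0) * dDet n k (r - (i+1)) := by
    linear_combination -hkey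
  rw [hd]
  apply neg_mem
  apply Ideal.sum_mem
  intro i hi
  rw [Finset.mem_range] at hi
  by_cases hpar : (i + 1) % 2 = 0
  case neg =>
    rw [if_neg hpar, zero_mul]
    exact zero_mem _
  case pos =>
    rw [if_pos hpar]
    obtain ⟨s, hs⟩ : ∃ s, i + 1 = 2 * s := ⟨(i+1)/2, by omega⟩
    have hs1 : 1 ≤ s := by omega
    have hsn : s ≤ n := by omega
    rw [hs, show 2 * s / 2 = s from by omega]
    by_cases hsk : s ≤ k
    case pos =>
      have hdm : dDet n k (r - 2 * s) ∈ I := by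
        by_cases hbig : r - 2 * s ≤ n + k
        case pos =>
          apply Ideal.subset_span
          apply Set.mem_union_left
          exact ⟨r - 2 * s, ⟨by omega, hbig⟩, rfl⟩
        case neg =>
          exact IH (r - 2 * s) (by omega) (by omega) (by omega)
      exact Ideal.mul_mem_left I ((-1) ^ s * bRel n k s) hdm
    case neg =>
      have hbs : bRel n k s ∈ I := by
        apply Ideal.subset_span
        apply Set.mem_union_right
        exact ⟨s, ⟨by omega, hsn⟩, rfl⟩
      exact Ideal.mul_mem_right (dDet n k (r - 2 * s)) I (Ideal.mul_mem_left I ((-1) ^ s) hbs)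
end

section
/- Fix integers 0 ≤ k ≤ n and set m = n − k. The number of k-strict partitions λ with at most m nonzero parts and with λ_1 ≤ n+k equals 2^m · binom(n, k). -/
open Finset

lemma strictAnti_add_le {t : ℕ} {g : Fin t → ℕ} (hg : StrictAnti g) :
    ∀ d (i j : Fin t), (j : ℕ) = i + d → g j + d ≤ g i := by
  intro d
  induction d with
  | zero => intro i j h; have : j = i := Fin.ext (by omega); simp [this]
  | succ d ih =>
    intro i j h
    have hlt : (i : ℕ) + d < t := by omega
    have h1 := ih i ⟨(i : ℕ) + d, hlt⟩ rfl
    have h2 : g j < g ⟨(i : ℕ) + d, hlt⟩ := hg (by simp [Fin.lt_def]; omega)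
    omega

lemma filter_val_lt_card {m : ℕ} {c : ℕ} (hc : c ≤ m) :
    (univ.filter fun i : Fin m => (i : ℕ) < c).card = c := by
  have : (univ.filter fun i : Fin m => (i : ℕ) < c)
      = Finset.map (Fin.castLEEmb hc) univ := by
    ext x
    simp only [mem_filter, mem_univ, true_and, Finset.mem_map, Fin.castLEEmb]
    constructor
    · intro hx
      refine ⟨⟨(x : ℕ), hx⟩, ?_⟩
      ext; simp
    · rintro ⟨y, rfl⟩; simp [y.2]
  rw [this, Finset.card_map, card_univ, Fintype.card_fin]

lemma mem_iff_lt_card {m : ℕ} (s : Finset (Fin m))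
    (hdc : ∀ i j : Fin m, i ≤ j → j ∈ s → i ∈ s) (i : Fin m) :
    i ∈ s ↔ (i : ℕ) < s.card := by
  constructor
  · intro hi
    have hsub : (univ.filter fun j : Fin m => (j : ℕ) < (i : ℕ) + 1) ⊆ s := by
      intro j hj
      simp only [mem_filter, mem_univ, true_and] at hj
      exact hdc j i (by rw [Fin.le_def]; omega) hi
    have := Finset.card_le_card hsub
    rw [filter_val_lt_card (by omega)] at this
    omega
  · intro hi
    by_contra hns
    have hsub : s ⊆ univ.filter fun j : Fin m => (j : ℕ) < (i : ℕ) := by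
      intro j hj
      simp only [mem_filter, mem_univ, true_and]
      by_contra hji
      exact hns (hdc i j (by rw [Fin.le_def]; omega) hj)
    have := Finset.card_le_card hsub
    rw [filter_val_lt_card (le_of_lt i.2)] at this
    omega

/-- Strictly monotone functions `Fin r → ℕ` with values `< N` correspond to
`r`-element subsets of `Fin N`. -/
def equivMono (N r : ℕ) :
    {g : Fin r → ℕ // StrictMono g ∧ ∀ i, g i < N} ≃ {s : Finset (Fin N) // s.card = r} where
  toFun g := ⟨univ.image (fun i => (⟨g.1 i, g.2.2 i⟩ : Fin N)), by
    rw [Finset.card_image_of_injective _ (fun a b hab =>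
      g.2.1.injective (by simpa [Fin.ext_iff] using hab)), card_univ, Fintype.card_fin]⟩
  invFun s := ⟨fun i => ((s.1.orderEmbOfFin s.2 i : Fin N) : ℕ),
    ⟨fun a b hab => by
      have := (s.1.orderEmbOfFin s.2).strictMono hab
      exact this,
     fun i => (s.1.orderEmbOfFin s.2 i).2⟩⟩
  left_inv := by
    rintro ⟨g, hm, hb⟩
    have key : (fun i => (⟨g i, hb i⟩ : Fin N)) =
        (univ.image (fun i => (⟨g i, hb i⟩ : Fin N))).orderEmbOfFin (by
          rw [Finset.card_image_of_injective _ (fun a b hab =>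
            hm.injective (by simpa [Fin.ext_iff] using hab)), card_univ, Fintype.card_fin]) :=
      Finset.orderEmbOfFin_unique _ (fun x => Finset.mem_image_of_mem _ (mem_univ x))
        (fun a b hab => by simp only [Fin.lt_def]; exact hm hab)
    ext i
    exact congrArg Fin.val (congrFun key.symm i)
  right_inv := by
    rintro ⟨s, hs⟩
    ext1
    have : (fun i => (⟨((s.orderEmbOfFin hs i : Fin N) : ℕ), (s.orderEmbOfFin hs i).2⟩ : Fin N))
        = fun i => s.orderEmbOfFin hs i := by ext i <;> simp
    simp only [this]
    rw [← Finset.coe_inj, Finset.coe_image, Finset.coe_univ, Set.image_univ,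
      Finset.range_orderEmbOfFin]

/-- Reverse the index order: strictly antitone ↔ strictly monotone. -/
def equivAnti (N r : ℕ) :
    {g : Fin r → ℕ // StrictAnti g ∧ ∀ i, g i < N} ≃
      {g : Fin r → ℕ // StrictMono g ∧ ∀ i, g i < N} where
  toFun g := ⟨g.1 ∘ Fin.rev, ⟨fun a b hab => g.2.1 (by simpa [Fin.lt_def] using Fin.rev_lt_rev.mpr hab),
    fun i => g.2.2 _⟩⟩
  invFun g := ⟨g.1 ∘ Fin.rev, ⟨fun a b hab => g.2.1 (Fin.rev_lt_rev.mpr hab), fun i => g.2.2 _⟩⟩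
  left_inv g := by ext i; simp [Fin.rev_rev]
  right_inv g := by ext i; simp [Fin.rev_rev]

lemma card_strictAnti (N r : ℕ) :
    Nat.card {g : Fin r → ℕ // StrictAnti g ∧ ∀ i, g i < N} = N.choose r := by
  rw [Nat.card_congr ((equivAnti N r).trans (equivMono N r)), Nat.card_eq_fintype_card,
    Fintype.card_finset_len, Fintype.card_fin]

/-- Weakly decreasing functions with values `≤ k` correspond (by adding a staircase)
to strictly decreasing functions with values `< t + k`. -/
def equivWeak (t k : ℕ) :
    {h : Fin t → ℕ // (∀ i j : Fin t, i ≤ j → h j ≤ h i) ∧ ∀ i, h i ≤ k} ≃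
      {g : Fin t → ℕ // StrictAnti g ∧ ∀ i, g i < t + k} where
  toFun h := ⟨fun i => h.1 i + (t - 1 - (i : ℕ)), by
    refine ⟨fun a b hab => ?_, fun i => ?_⟩
    · have h1 := h.2.1 a b (le_of_lt hab)
      have ha := a.2; have hb := b.2
      have : (a : ℕ) < (b : ℕ) := hab
      dsimp only
      omega
    · have := h.2.2 i
      have hi := i.2
      dsimp only
      omega⟩
  invFun g := ⟨fun i => g.1 i - (t - 1 - (i : ℕ)), by
    refine ⟨fun a b hab => ?_, fun i => ?_⟩
    · have h1 := strictAnti_add_le g.2.1 ((b : ℕ) - a) a b (by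
        have := Fin.le_def.mp hab; omega)
      have ha := a.2; have hb := b.2
      dsimp only
      omega
    · have h1 := strictAnti_add_le g.2.1 (i : ℕ) ⟨0, lt_of_le_of_lt (Nat.zero_le _) i.2⟩ i (by simp)
      have h2 := g.2.2 ⟨0, by have := i.2; omega⟩
      have hi := i.2
      dsimp only
      omega⟩
  left_inv h := by ext i; simp
  right_inv g := by
    ext i
    have hi := i.2
    have h1 := strictAnti_add_le g.2.1 (t - 1 - (i : ℕ)) i ⟨t - 1, by omega⟩ (by simp; omega)
    simp only
    omega

/-- Parts in `(k, n+k]` correspond to values `< n` by subtracting `k+1`. -/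
def equivBig (n k r : ℕ) :
    {g : Fin r → ℕ // StrictAnti g ∧ ∀ i, k < g i ∧ g i ≤ n + k} ≃
      {g : Fin r → ℕ // StrictAnti g ∧ ∀ i, g i < n} where
  toFun g := ⟨fun i => g.1 i - (k + 1), by
    refine ⟨fun a b hab => ?_, fun i => ?_⟩
    · have h1 := g.2.1 hab
      have h2 := (g.2.2 a).1; have h3 := (g.2.2 b).1
      dsimp only
      omega
    · have h2 := (g.2.2 i).1; have h3 := (g.2.2 i).2
      dsimp only
      omega⟩
  invFun g := ⟨fun i => g.1 i + (k + 1), by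
    refine ⟨fun a b hab => ?_, fun i => ?_⟩
    · have h1 := g.2.1 hab; dsimp only; omega
    · have := g.2.2 i; dsimp only; omega⟩
  left_inv g := by ext i; have := (g.2.2 i).1; simp only; omega
  right_inv g := by ext i; simp

lemma card_weak (t k : ℕ) :
    Nat.card {h : Fin t → ℕ // (∀ i j : Fin t, i ≤ j → h j ≤ h i) ∧ ∀ i, h i ≤ k}
      = (t + k).choose t := by
  rw [Nat.card_congr (equivWeak t k), card_strictAnti]

lemma card_big (n k r : ℕ) :
    Nat.card {g : Fin r → ℕ // StrictAnti g ∧ ∀ i, k < g i ∧ g i ≤ n + k} = n.choose r := by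
  rw [Nat.card_congr (equivBig n k r), card_strictAnti]

/-- Reassemble a `k`-strict partition from its parts `> k` and its parts `≤ k`. -/
def unpack (m N k : ℕ) (hkN : k ≤ N)
    (x : Σ r : Fin (m + 1),
        {g : Fin (r : ℕ) → ℕ // StrictAnti g ∧ ∀ i, k < g i ∧ g i ≤ N} ×
        {h : Fin (m - (r : ℕ)) → ℕ // (∀ i j, i ≤ j → h j ≤ h i) ∧ ∀ i, h i ≤ k}) :
    {f : Fin m → ℕ //
        (∀ i j : Fin m, i ≤ j → f j ≤ f i) ∧
        (∀ i : Fin m, f i ≤ N) ∧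
        (∀ i j : Fin m, (i : ℕ) + 1 = (j : ℕ) → k < f i → f j < f i)} :=
  ⟨fun i => if hi : (i : ℕ) < (x.1 : ℕ) then x.2.1.1 ⟨i, hi⟩
      else x.2.2.1 ⟨(i : ℕ) - (x.1 : ℕ), by have := i.2; omega⟩, by
    obtain ⟨⟨r, hr⟩, ⟨g, hg1, hg2⟩, ⟨h, hh1, hh2⟩⟩ := x
    refine ⟨fun i j hij => ?_, fun i => ?_, fun i j hij hki => ?_⟩
    · dsimp only
      by_cases hj : (j : ℕ) < r
      · have hi : (i : ℕ) < r := lt_of_le_of_lt (Fin.le_def.mp hij) hj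
        rw [dif_pos hi, dif_pos hj]
        exact hg1.antitone (by rw [Fin.le_def]; exact Fin.le_def.mp hij)
      · by_cases hi : (i : ℕ) < r
        · rw [dif_pos hi, dif_neg hj]
          exact le_of_lt (lt_of_le_of_lt (hh2 _) (hg2 ⟨i, hi⟩).1)
        · rw [dif_neg hi, dif_neg hj]
          exact hh1 _ _ (by rw [Fin.le_def]; have := Fin.le_def.mp hij; dsimp only; omega)
    · dsimp only
      split_ifs with hi
      · exact (hg2 _).2
      · exact le_trans (hh2 _) hkN
    · dsimp only at hki ⊢
      have hi : (i : ℕ) < r := by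
        by_contra hni
        rw [dif_neg hni] at hki
        exact absurd (hh2 _) (not_le.mpr hki)
      rw [dif_pos hi] at hki ⊢
      by_cases hj : (j : ℕ) < r
      · rw [dif_pos hj]
        exact hg1 (by rw [Fin.lt_def]; dsimp only; omega)
      · rw [dif_neg hj]
        exact lt_of_le_of_lt (hh2 _) (hg2 ⟨i, hi⟩).1⟩

set_option maxHeartbeats 2000000 in
lemma unpack_bijective (m N k : ℕ) (hkN : k ≤ N) :
    Function.Bijective (unpack m N k hkN) := by
  constructor
  · rintro ⟨⟨r1, hr1⟩, ⟨g1, hg11, hg12⟩, ⟨h1, hh11, hh12⟩⟩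
      ⟨⟨r2, hr2⟩, ⟨g2, hg21, hg22⟩, ⟨h2, hh21, hh22⟩⟩ heq
    have hfe : ∀ i : Fin m,
        (if hi : (i : ℕ) < r1 then g1 ⟨i, hi⟩ else
            h1 ⟨(i : ℕ) - r1, by have := i.2; simp only [Fin.val_mk]; omega⟩)
          = (if hi : (i : ℕ) < r2 then g2 ⟨i, hi⟩ else
              h2 ⟨(i : ℕ) - r2, by have := i.2; simp only [Fin.val_mk]; omega⟩) := by
      intro i
      exact congrFun (congrArg Subtype.val heq) i
    have key : ∀ i : Fin m, ((i : ℕ) < r1 ↔ (i : ℕ) < r2) := by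
      intro i
      constructor
      · intro hi
        by_contra h2i
        have e := hfe i
        rw [dif_pos hi, dif_neg h2i] at e
        exact absurd (hg12 ⟨i, hi⟩).1 (not_lt.mpr (le_trans e.le (hh22 _)))
      · intro hi
        by_contra h1i
        have e := hfe i
        rw [dif_neg h1i, dif_pos hi] at e
        exact absurd (hg22 ⟨i, hi⟩).1 (not_lt.mpr (le_trans e.ge (hh12 _)))
    have hr : r1 = r2 := by
      rcases Nat.lt_trichotomy r1 r2 with h | h | h
      · have hlt : r1 < m := by omega
        have h2 := (key ⟨r1, hlt⟩).mpr (by simp only [Fin.val_mk]; omega)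
        simp only [Fin.val_mk] at h2
        omega
      · exact h
      · have hlt : r2 < m := by omega
        have h2 := (key ⟨r2, hlt⟩).mp (by simp only [Fin.val_mk]; omega)
        simp only [Fin.val_mk] at h2
        omega
    subst hr
    refine Sigma.ext rfl (heq_of_eq ?_)
    refine Prod.ext (Subtype.ext ?_) (Subtype.ext ?_)
    · funext i
      have hi2 : (i : ℕ) < r1 := i.2
      have e := hfe ⟨(i : ℕ), by omega⟩
      rw [dif_pos hi2, dif_pos hi2] at e
      exact e
    · funext j
      have hj2 : (j : ℕ) < m - r1 := j.2
      have hjm : r1 + (j : ℕ) < m := by omega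
      have e := hfe ⟨r1 + (j : ℕ), hjm⟩
      simp only [dif_neg (show ¬ (r1 + (j : ℕ) < r1) by omega)] at e
      have e' : (h1 (⟨r1 + (j : ℕ) - r1, by omega⟩ : Fin (m - r1)) : ℕ)
          = h2 (⟨r1 + (j : ℕ) - r1, by omega⟩ : Fin (m - r1)) := e
      have hj : (⟨r1 + (j : ℕ) - r1, by omega⟩ : Fin (m - r1)) = j :=
        Fin.ext (by simp only [Fin.val_mk]; omega)
      rwa [hj] at e'
  · rintro ⟨f, hmono, hbd, hstrict⟩
    classical
    set s := univ.filter (fun i : Fin m => k < f i) with hs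
    have hdc : ∀ i j : Fin m, i ≤ j → j ∈ s → i ∈ s := by
      intro i j hij hj
      simp only [hs, mem_filter, mem_univ, true_and] at hj ⊢
      exact lt_of_lt_of_le hj (hmono i j hij)
    have hiff : ∀ i : Fin m, k < f i ↔ (i : ℕ) < s.card := by
      intro i
      rw [← mem_iff_lt_card s hdc]
      simp [hs]
    have hrle : s.card ≤ m := le_trans (Finset.card_filter_le _ _) (by simp)
    refine ⟨⟨⟨s.card, by omega⟩,
      ⟨fun i => f ⟨(i : ℕ), by have := i.2; omega⟩, ?_, ?_⟩,
      ⟨fun j => f ⟨s.card + (j : ℕ), by have := j.2; simp only [Fin.val_mk] at this; omega⟩, ?_, ?_⟩⟩, ?_⟩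
    · intro a b hab
      have hb : (b : ℕ) < s.card := b.2
      have hab' : (a : ℕ) < (b : ℕ) := hab
      have hka : k < f ⟨(a : ℕ), by omega⟩ := (hiff _).mpr (by simp only [Fin.val_mk]; omega)
      have h1 : f ⟨(a : ℕ) + 1, by omega⟩ < f ⟨(a : ℕ), by omega⟩ := hstrict _ _ rfl hka
      have h2 : f ⟨(b : ℕ), by omega⟩ ≤ f ⟨(a : ℕ) + 1, by omega⟩ :=
        hmono _ _ (by rw [Fin.le_def]; dsimp only; omega)
      exact lt_of_le_of_lt h2 h1
    · intro i
      have hi : (i : ℕ) < s.card := i.2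
      exact ⟨(hiff _).mpr (by simp only [Fin.val_mk]; omega), hbd _⟩
    · intro i j hij
      exact hmono _ _ (by rw [Fin.le_def]; dsimp only; have := Fin.le_def.mp hij; omega)
    · intro j
      have hj : (j : ℕ) < m - s.card := j.2
      dsimp only
      by_contra hlt
      have h2 := (hiff _).mp (not_le.mp hlt)
      simp only [Fin.val_mk] at h2
      omega
    · apply Subtype.ext
      funext i
      show (if hi : (i : ℕ) < s.card then _ else _) = f i
      split_ifs with hi
      · exact congrArg f (Fin.ext rfl)
      · exact congrArg f (Fin.ext (by dsimp only; omega))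

lemma key_identity (n k : ℕ) (hk : k ≤ n) :
    ∑ r ∈ Finset.range (n - k + 1), n.choose r * (n - r).choose k
      = 2 ^ (n - k) * n.choose k := by
  have step : ∀ r ∈ Finset.range (n - k + 1),
      n.choose r * (n - r).choose k = n.choose k * (n - k).choose r := by
    intro r hr
    simp only [mem_range] at hr
    have h1 := Nat.choose_mul (n := n) (show r ≤ r + k by omega)
    have h2 := Nat.choose_mul (n := n) (show k ≤ r + k by omega)
    have h3 : (r + k).choose r = (r + k).choose k := by
      rw [← Nat.choose_symm (show k ≤ r + k by omega)]
      congr 1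
      omega
    simp only [Nat.add_sub_cancel_left, Nat.add_sub_cancel] at h1 h2
    calc n.choose r * (n - r).choose k = n.choose (r + k) * (r + k).choose r := h1.symm
      _ = n.choose (r + k) * (r + k).choose k := by rw [h3]
      _ = n.choose k * (n - k).choose r := h2
  rw [Finset.sum_congr rfl step, ← Finset.mul_sum, Nat.sum_range_choose, mul_comm]

/-- **Rank of `H^*(IG(n−k,2n))` as a count of `k`-strict partitions.**
With `m = n − k`, the number of `k`-strict partitions with at most `m` nonzero
parts and largest part at most `n+k` (represented as weakly decreasing functions
`Fin m → ℕ`) equals `2^m · binom(n,k)`. -/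
theorem card_kStrict_partitions (n k : ℕ) (hk : k ≤ n) :
    Nat.card {f : Fin (n - k) → ℕ //
        (∀ i j : Fin (n - k), i ≤ j → f j ≤ f i) ∧
        (∀ i : Fin (n - k), f i ≤ n + k) ∧
        (∀ i j : Fin (n - k), (i : ℕ) + 1 = (j : ℕ) → k < f i → f j < f i)} =
      2 ^ (n - k) * n.choose k := by
  set m := n - k with hm
  rw [← Nat.card_eq_of_bijective _ (unpack_bijective m (n + k) k (by omega))]
  have e : (Σ r : Fin (m + 1),
        {g : Fin (r : ℕ) → ℕ // StrictAnti g ∧ ∀ i, k < g i ∧ g i ≤ n + k} ×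
        {h : Fin (m - (r : ℕ)) → ℕ // (∀ i j, i ≤ j → h j ≤ h i) ∧ ∀ i, h i ≤ k}) ≃
      (Σ r : Fin (m + 1),
        {s : Finset (Fin n) // s.card = (r : ℕ)} ×
        {s : Finset (Fin ((m - (r : ℕ)) + k)) // s.card = m - (r : ℕ)}) :=
    Equiv.sigmaCongrRight fun r => Equiv.prodCongr
      ((equivBig n k (r : ℕ)).trans ((equivAnti n (r : ℕ)).trans (equivMono n (r : ℕ))))
      ((equivWeak (m - (r : ℕ)) k).trans ((equivAnti ((m - (r : ℕ)) + k) (m - (r : ℕ))).trans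
        (equivMono ((m - (r : ℕ)) + k) (m - (r : ℕ)))))
  rw [Nat.card_congr e, Nat.card_eq_fintype_card, Fintype.card_sigma]
  simp only [Fintype.card_prod, Fintype.card_finset_len, Fintype.card_fin]
  rw [Fin.sum_univ_eq_sum_range (fun r => n.choose r * ((m - r + k).choose (m - r)))]
  rw [← key_identity n k hk]
  refine Finset.sum_congr rfl fun r hr => ?_
  simp only [mem_range] at hr
  have h1 : m - r + k = n - r := by omega
  have h2 : m - r = (n - r) - k := by omega
  rw [h1, h2, Nat.choose_symm (by omega)]
end

section
/- Fix integers 0 ≤ m ≤ n and set k = n − m. The map sending an index set P = {p_1 < ⋯ < p_m} ⊆ {1,…,2n} to the sequence λ(P) = (λ_1,…,λ_m) defined by λ_j = n+k+1−p_j + #{i < j : p_i + p_j > 2n+1} is a bijection from the set of all index sets onto 𝒫(k,n), the set of k-strict partitions contained in an m × (n+k) rectangle. In particular, for every index set P the sequence λ(P) is a weakly decreasing sequence of non-negative integers in which no part greater than k is repeated, with λ_1 ≤ n+k. -/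
open Finset

section Counting
variable {n m : ℕ} {P : Fin m → ℕ}

/-- abbreviation for the count -/
def cnt (n : ℕ) (P : Fin m → ℕ) (j : Fin m) : ℕ :=
  (Finset.univ.filter fun i : Fin m => i < j ∧ 2 * n + 1 < P i + P j).card

lemma cnt_eq_zero (hmono : StrictMono P) {j : Fin m} (hj : P j ≤ n) :
    cnt n P j = 0 := by
  unfold cnt
  rw [Finset.card_eq_zero, Finset.filter_eq_empty_iff]
  rintro i - ⟨hij, hgt⟩
  have := hmono hij
  omega

/-- pairing bound: if `P j ≥ n+1` then `cnt ≤ P j - n - 1`. -/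
lemma cnt_le (hmono : StrictMono P)
    (hrange : ∀ j, 1 ≤ P j ∧ P j ≤ 2 * n)
    (hne : ∀ i j, P i + P j ≠ 2 * n + 1) {j : Fin m} (hj : n + 1 ≤ P j) :
    cnt n P j + n + 1 ≤ P j := by
  have hcard : cnt n P j ≤ (Finset.Icc (2*n+2 - P j) n).card := by
    apply Finset.card_le_card_of_injOn (fun i => if P i ≤ n then P i else 2*n+1 - P i)
    · intro i hi
      simp only [Finset.mem_coe, Finset.mem_filter, Finset.mem_univ, true_and] at hi
      obtain ⟨hij, hgt⟩ := hi
      have h1 := hmono hij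
      have h2 := (hrange i).2
      have h3 := (hrange j).2
      simp only [Finset.mem_coe, Finset.mem_Icc]
      split_ifs <;> omega
    · intro i hi i' hi' heq
      simp only [Finset.mem_coe, Finset.mem_filter, Finset.mem_univ, true_and] at hi hi'
      have h2 := (hrange i).2
      have h2' := (hrange i').2
      have hne1 := hne i i'
      have hne2 := hne i' i
      have : P i = P i' := by
        by_contra hc
        simp only at heq
        split_ifs at heq <;> omega
      exact hmono.injective this
  rw [Nat.card_Icc] at hcard
  have := (hrange j).2
  omega

/-- lower bound: `cnt ≥ m - 1 - (2n - P j)` when `P j ≥ n + 1`. -/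
lemma cnt_ge (hmono : StrictMono P)
    (hrange : ∀ j, 1 ≤ P j ∧ P j ≤ 2 * n)
    (hne : ∀ i j, P i + P j ≠ 2 * n + 1) {j : Fin m} (hj : n + 1 ≤ P j) :
    m + P j ≤ 2 * n + 1 + cnt n P j := by
  classical
  set D := Finset.univ.filter fun i : Fin m => i < j ∧ P i + P j < 2*n+1 with hD
  set E := Finset.univ.filter fun i : Fin m => j < i with hE
  have hCD : cnt n P j + D.card = (j : ℕ) := by
    unfold cnt
    rw [← Finset.card_union_of_disjoint]
    · have : (Finset.univ.filter fun i : Fin m => i < j ∧ 2*n+1 < P i + P j) ∪ D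
          = Finset.univ.filter fun i : Fin m => i < j := by
        ext i
        simp only [hD, Finset.mem_union, Finset.mem_filter, Finset.mem_univ, true_and]
        have := hne i j
        constructor
        · rintro (⟨h, -⟩ | ⟨h, -⟩) <;> exact h
        · intro h
          rcases lt_trichotomy (P i + P j) (2*n+1) with hlt | heq | hgt
          · exact Or.inr ⟨h, hlt⟩
          · omega
          · exact Or.inl ⟨h, hgt⟩
      rw [this]
      have : (Finset.univ.filter fun i : Fin m => i < j) = Finset.Iio j := by ext i; simp
      rw [this, Fin.card_Iio]
    · rw [Finset.disjoint_filter]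
      rintro i - ⟨-, h1⟩ ⟨-, h2⟩
      omega
  have hEcard : E.card = m - 1 - (j : ℕ) := by
    have : E = Finset.Ioi j := by ext i; simp [hE]
    rw [this, Fin.card_Ioi]
  have hDE : D.card + E.card ≤ 2 * n - P j := by
    have hdisj : Disjoint D E := by
      rw [Finset.disjoint_filter]
      rintro i - ⟨h1, -⟩ h2
      exact absurd h2 (not_lt.2 h1.le)
    rw [← Finset.card_union_of_disjoint hdisj]
    have : (Finset.Icc 1 (2*n - P j)).card = 2*n - P j := by
      rw [Nat.card_Icc]; omega
    rw [← this]
    apply Finset.card_le_card_of_injOn (fun i => if i < j then P i else 2*n+1 - P i)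
    · intro i hi
      simp only [Finset.mem_coe, hD, hE, Finset.mem_union, Finset.mem_filter, Finset.mem_univ, true_and] at hi
      simp only [Finset.mem_coe, Finset.mem_Icc]
      have h2 := (hrange i).2
      have h1 := (hrange i).1
      rcases hi with ⟨hij, hlt⟩ | hij
      · rw [if_pos hij]; have := hne i j; omega
      · rw [if_neg (by exact fun h => absurd h (not_lt.2 hij.le))]
        have := hmono hij
        omega
    · intro i hi i' hi' heq
      simp only [Finset.mem_coe, hD, hE, Finset.mem_union, Finset.mem_filter,
        Finset.mem_univ, true_and] at hi hi'
      have h2 := (hrange i).2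
      have h2' := (hrange i').2
      have hne1 := hne i i'
      have hne2 := hne i' i
      have : P i = P i' := by
        by_contra hc
        simp only at heq
        split_ifs at heq <;> omega
      exact hmono.injective this
  have hj2 := j.2
  have := (hrange j).2
  omega

end Counting

section Mono
variable {n m : ℕ} {P : Fin m → ℕ}

/-- adjacent decrease: `cnt j' + P j ≤ cnt j + P j'` when `j+1 = j'`. -/
lemma cnt_step (hmono : StrictMono P)
    (hrange : ∀ j, 1 ≤ P j ∧ P j ≤ 2 * n)
    (hne : ∀ i j, P i + P j ≠ 2 * n + 1) {j j' : Fin m}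
    (hjj : (j : ℕ) + 1 = (j' : ℕ)) :
    cnt n P j' + P j ≤ cnt n P j + P j' := by
  classical
  have hjlt : j < j' := by rw [Fin.lt_iff_val_lt_val]; omega
  have hPlt : P j < P j' := hmono hjlt
  set X := Finset.univ.filter
    (fun i : Fin m => i < j ∧ 2*n+1 < P i + P j' ∧ P i + P j < 2*n+1) with hX
  have hsub : (Finset.univ.filter fun i : Fin m => i < j' ∧ 2*n+1 < P i + P j')
      ⊆ (Finset.univ.filter fun i : Fin m => i < j ∧ 2*n+1 < P i + P j) ∪ X ∪ {j} := by
    intro i hi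
    simp only [Finset.mem_filter, Finset.mem_univ, true_and] at hi
    obtain ⟨hij', hgt⟩ := hi
    simp only [hX, Finset.mem_union, Finset.mem_filter, Finset.mem_univ, true_and,
      Finset.mem_singleton]
    rcases eq_or_lt_of_le (show (i:ℕ) ≤ (j:ℕ) by
      have := Fin.lt_iff_val_lt_val.1 hij'; omega) with heq | hlt
    · exact Or.inr (Fin.ext heq)
    · have hij : i < j := Fin.lt_iff_val_lt_val.2 hlt
      have := hne i j
      rcases lt_or_ge (2*n+1) (P i + P j) with h | h
      · exact Or.inl (Or.inl ⟨hij, h⟩)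
      · exact Or.inl (Or.inr ⟨hij, hgt, by omega⟩)
  have hXcard : X.card + P j + 1 ≤ P j' := by
    have : X.card ≤ (Finset.Ioo (P j) (P j')).card := by
      apply Finset.card_le_card_of_injOn (fun i => 2*n+1 - P i)
      · intro i hi
        simp only [Finset.mem_coe, hX, Finset.mem_filter, Finset.mem_univ, true_and] at hi
        simp only [Finset.mem_coe, Finset.mem_Ioo]
        have := (hrange i).2
        omega
      · intro i hi i' hi' heq
        simp only [Finset.mem_coe, hX, Finset.mem_filter, Finset.mem_univ, true_and] at hi hi'
        simp only at heq
        have := (hrange i).2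
        have := (hrange i').2
        exact hmono.injective (by omega)
    rw [Nat.card_Ioo] at this
    omega
  have := (Finset.card_le_card hsub).trans
    ((Finset.card_union_le _ _).trans (by
      exact Nat.add_le_add (Finset.card_union_le _ _) (le_refl 1)))
  unfold cnt
  unfold cnt at *
  omega

/-- strict decrease when `P j ≤ n`. -/
lemma cnt_step_strict (hmono : StrictMono P)
    (hrange : ∀ j, 1 ≤ P j ∧ P j ≤ 2 * n)
    (hne : ∀ i j, P i + P j ≠ 2 * n + 1) {j j' : Fin m}
    (hjj : (j : ℕ) + 1 = (j' : ℕ)) (hPj : P j ≤ n) :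
    cnt n P j' + P j + 1 ≤ cnt n P j + P j' := by
  classical
  have hjlt : j < j' := by rw [Fin.lt_iff_val_lt_val]; omega
  have hPlt : P j < P j' := hmono hjlt
  have h0 : cnt n P j = 0 := cnt_eq_zero hmono hPj
  have hcard : cnt n P j' ≤ (Finset.Icc (2*n+2 - P j') (P j)).card := by
    apply Finset.card_le_card_of_injOn P
    · intro i hi
      simp only [Finset.mem_coe, Finset.mem_filter, Finset.mem_univ, true_and] at hi
      obtain ⟨hij', hgt⟩ := hi
      have hile : (i : ℕ) ≤ (j : ℕ) := by
        have := Fin.lt_iff_val_lt_val.1 hij'; omega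
      have : P i ≤ P j := by
        rcases eq_or_lt_of_le hile with h | h
        · rw [Fin.ext h]
        · exact (hmono (Fin.lt_iff_val_lt_val.2 h)).le
      simp only [Finset.mem_coe, Finset.mem_Icc]
      have := (hrange j').2
      omega
    · intro i _ i' _ heq
      exact hmono.injective heq
  rw [Nat.card_Icc] at hcard
  have := (hrange j').2
  omega

end Mono

def lamF (n k : ℕ) {m : ℕ} (P : Fin m → ℕ) (j : Fin m) : ℤ :=
  (n + k + 1 : ℤ) - P j +
    ((Finset.univ.filter fun i : Fin m => i < j ∧ 2 * n + 1 < P i + P j).card : ℤ)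

lemma lamF_eq (n k : ℕ) {m : ℕ} (P : Fin m → ℕ) (j : Fin m) :
    lamF n k P j = (n + k + 1 : ℤ) - P j + (cnt n P j : ℤ) := rfl

section MapsTo
variable {n m k : ℕ} {P : Fin m → ℕ}
  (hmk : m + k = n)
  (hmono : StrictMono P)
  (hrange : ∀ j, 1 ≤ P j ∧ P j ≤ 2 * n)
  (hne : ∀ i j, P i + P j ≠ 2 * n + 1)
include hmk hmono hrange hne

lemma lamF_nonneg (j : Fin m) : 0 ≤ lamF n k P j := by
  rw [lamF_eq]
  rcases le_or_gt (P j) n with h | h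
  · have := cnt_eq_zero hmono h
    have := (hrange j).1
    omega
  · have := cnt_ge hmono hrange hne (j := j) h
    have := (hrange j).2
    omega

lemma lamF_le (j : Fin m) : lamF n k P j ≤ (n + k : ℤ) := by
  rw [lamF_eq]
  rcases le_or_gt (P j) n with h | h
  · have h0 := cnt_eq_zero hmono h
    have := (hrange j).1
    omega
  · have := cnt_le hmono hrange hne (j := j) h
    omega

lemma lamF_anti : ∀ i j : Fin m, i ≤ j → lamF n k P j ≤ lamF n k P i := by
  have step : ∀ j j' : Fin m, (j : ℕ) + 1 = (j' : ℕ) → lamF n k P j' ≤ lamF n k P j := by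
    intro j j' hjj
    rw [lamF_eq, lamF_eq]
    have h1 := cnt_step hmono hrange hne hjj
    have h2 : P j < P j' := hmono (by rw [Fin.lt_iff_val_lt_val]; omega)
    omega
  intro i j hij
  obtain ⟨iv, hi⟩ := i
  obtain ⟨jv, hj⟩ := j
  simp only [Fin.le_def] at hij
  induction jv with
  | zero =>
    have : iv = 0 := by omega
    subst this; rfl
  | succ jv ih =>
    rcases Nat.lt_or_ge iv (jv+1) with h | h
    · have hjv : jv < m := by omega
      calc lamF n k P ⟨jv+1, hj⟩ ≤ lamF n k P ⟨jv, hjv⟩ := step ⟨jv, hjv⟩ ⟨jv+1, hj⟩ rfl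
        _ ≤ lamF n k P ⟨iv, hi⟩ := ih hjv (by omega)
    · have : iv = jv + 1 := by omega
      subst this; rfl

lemma lamF_strict : ∀ i j : Fin m, (i : ℕ) + 1 = (j : ℕ) →
    (k : ℤ) < lamF n k P i → lamF n k P j < lamF n k P i := by
  intro i j hij hk
  have hPi : P i ≤ n := by
    by_contra h
    push_neg at h
    have := cnt_le hmono hrange hne (j := i) h
    rw [lamF_eq] at hk
    omega
  have := cnt_step_strict hmono hrange hne hij hPi
  have h2 : P i < P j := hmono (by rw [Fin.lt_iff_val_lt_val]; omega)
  rw [lamF_eq, lamF_eq]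
  omega

end MapsTo

section Inj
variable {n m k : ℕ}

lemma lamF_injOn (hmk : m + k = n) :
    Set.InjOn (lamF n k (m := m))
      {P : Fin m → ℕ | StrictMono P ∧ (∀ j, 1 ≤ P j ∧ P j ≤ 2 * n) ∧
        ∀ i j, P i + P j ≠ 2 * n + 1} := by
  classical
  -- auxiliary: asymmetric contradiction
  have key : ∀ (P Q : Fin m → ℕ), StrictMono P → (∀ j, 1 ≤ P j ∧ P j ≤ 2*n) →
      (∀ i j, P i + P j ≠ 2*n+1) → StrictMono Q → (∀ j, 1 ≤ Q j ∧ Q j ≤ 2*n) →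
      (∀ i j, Q i + Q j ≠ 2*n+1) →
      ∀ j : Fin m, (∀ i : Fin m, i < j → P i = Q i) →
      lamF n k P j = lamF n k Q j → P j < Q j → False := by
    intro P Q hPm hPr hPn hQm hQr hQn j hpre hlam hlt
    rw [lamF_eq, lamF_eq] at hlam
    have hQfilter : cnt n Q j = (Finset.univ.filter
        fun i : Fin m => i < j ∧ 2*n+1 < P i + Q j).card := by
      unfold cnt
      congr 1
      apply Finset.filter_congr
      intro i _
      constructor
      · rintro ⟨h1, h2⟩; exact ⟨h1, by rwa [hpre i h1]⟩
      · rintro ⟨h1, h2⟩; exact ⟨h1, by rwa [← hpre i h1]⟩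
    have hsub : (Finset.univ.filter fun i : Fin m => i < j ∧ 2*n+1 < P i + Q j)
        ⊆ (Finset.univ.filter fun i : Fin m => i < j ∧ 2*n+1 < P i + P j) ∪
          (Finset.univ.filter fun i : Fin m => i < j ∧ 2*n+1 < P i + Q j ∧ P i + P j < 2*n+1) := by
      intro i hi
      simp only [Finset.mem_filter, Finset.mem_univ, true_and, Finset.mem_union] at hi ⊢
      obtain ⟨h1, h2⟩ := hi
      have := hPn i j
      rcases lt_or_ge (2*n+1) (P i + P j) with h | h
      · exact Or.inl ⟨h1, h⟩
      · exact Or.inr ⟨h1, h2, by omega⟩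
    have hXcard : (Finset.univ.filter
        fun i : Fin m => i < j ∧ 2*n+1 < P i + Q j ∧ P i + P j < 2*n+1).card
        ≤ (Finset.Ioo (P j) (Q j)).card := by
      apply Finset.card_le_card_of_injOn (fun i => 2*n+1 - P i)
      · intro i hi
        simp only [Finset.mem_coe, Finset.mem_filter, Finset.mem_univ, true_and] at hi
        simp only [Finset.mem_coe, Finset.mem_Ioo]
        have := (hPr i).2
        omega
      · intro i hi i' hi' heq
        simp only [Finset.mem_coe, Finset.mem_filter, Finset.mem_univ, true_and] at hi hi'
        simp only at heq
        have := (hPr i).2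
        have := (hPr i').2
        exact hPm.injective (by omega)
    rw [Nat.card_Ioo] at hXcard
    have := (Finset.card_le_card hsub).trans (Finset.card_union_le _ _)
    rw [← hQfilter] at this
    unfold cnt at *
    omega
  rintro P ⟨hPm, hPr, hPn⟩ Q ⟨hQm, hQr, hQn⟩ hPQ
  funext j
  obtain ⟨jv, hj⟩ := j
  induction jv using Nat.strong_induction_on with
  | _ jv ih =>
    have hpre : ∀ i : Fin m, i < ⟨jv, hj⟩ → P i = Q i := by
      intro i hi
      obtain ⟨iv, hi'⟩ := i
      exact ih iv (Fin.lt_iff_val_lt_val.1 hi) hi'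
    have hlam : lamF n k P ⟨jv, hj⟩ = lamF n k Q ⟨jv, hj⟩ := congrFun hPQ _
    rcases lt_trichotomy (P ⟨jv, hj⟩) (Q ⟨jv, hj⟩) with h | h | h
    · exact absurd (key P Q hPm hPr hPn hQm hQr hQn _ hpre hlam h) (fun f => f)
    · exact h
    · exact absurd (key Q P hQm hQr hQn hPm hPr hPn _
        (fun i hi => (hpre i hi).symm) hlam.symm h) (fun f => f)

section Psi

/-- order isomorphism `[1,2n-2] → [1,2n] \ {a,b}` (for `a < b`, `a+b = 2n+1`). -/
def psi (a b q : ℕ) : ℕ := if q < a then q else if q + 1 < b then q + 1 else q + 2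

variable {a b n q q' : ℕ}

lemma psi_ge : q ≤ psi a b q := by unfold psi; split_ifs <;> omega

lemma psi_le : psi a b q ≤ q + 2 := by unfold psi; split_ifs <;> omega

lemma psi_lt_psi (h : q < q') : psi a b q < psi a b q' := by
  unfold psi; split_ifs <;> omega

lemma psi_le_psi (h : q ≤ q') : psi a b q ≤ psi a b q' := by
  unfold psi; split_ifs <;> omega

lemma psi_ne (ha : a < b) : psi a b q ≠ a ∧ psi a b q ≠ b := by
  unfold psi; split_ifs <;> omega

lemma psi_ge_of (ha : a < b) (h : a ≤ q) : q + 1 ≤ psi a b q := by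
  unfold psi; split_ifs <;> omega

lemma psi_high (ha : a < b) (h : b ≤ q + 1) : psi a b q = q + 2 := by
  unfold psi; split_ifs <;> omega

lemma psi_sum_gt_iff (ha : a < b) (hs : a + b = 2*n+1)
    (h1 : 1 ≤ q) (h1' : 1 ≤ q') (hq : q + q' + 2 ≠ 2*n+1) :
    2*n+1 < psi a b q + psi a b q' ↔ 2*n+1 < q + q' + 2 := by
  unfold psi; split_ifs <;> omega

lemma psi_sum_ne (ha : a < b) (hs : a + b = 2*n+1)
    (hq : q + q' + 2 ≠ 2*n+1) :
    psi a b q + psi a b q' ≠ 2*n+1 := by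
  unfold psi; split_ifs <;> omega

lemma psi_shift {p1 c1 : ℕ} (ha : a < b)
    (hor : p1 = a ∧ c1 = b ∨ p1 = b ∧ c1 = a)
    (hgt : p1 < psi a b q) :
    psi a b q = q + 1 + (if c1 < psi a b q then 1 else 0) := by
  unfold psi at *; split_ifs at * <;> omega

end Psi

lemma lamF_surj : ∀ (m k : ℕ) (lam : Fin m → ℤ),
    (∀ i j : Fin m, i ≤ j → lam j ≤ lam i) →
    (∀ j, 0 ≤ lam j ∧ lam j ≤ ((m + k : ℕ) + k : ℤ)) →
    (∀ i j : Fin m, (i : ℕ) + 1 = (j : ℕ) → (k : ℤ) < lam i → lam j < lam i) →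
    ∃ P : Fin m → ℕ,
      (StrictMono P ∧ (∀ j, 1 ≤ P j ∧ P j ≤ 2 * (m + k)) ∧
        (∀ i j, P i + P j ≠ 2 * (m + k) + 1)) ∧ lamF (m + k) k P = lam := by
  intro m
  induction m with
  | zero =>
    intro k lam _ _ _
    exact ⟨fun i => i.elim0, ⟨fun i => i.elim0, fun i => i.elim0, fun i => i.elim0⟩,
      funext fun j => j.elim0⟩
  | succ m ih =>
    intro k lam hanti hbdd hstrict
    have hn2 : 2 * (m + k) + 2 = 2 * (m + 1 + k) := by omega
    set n := m + 1 + k with hn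
    set i0 : Fin (m + 1) := 0 with hi0
    -- restricted sequence
    set lam' : Fin m → ℤ := fun j => lam j.succ with hlam'
    have hanti' : ∀ i j : Fin m, i ≤ j → lam' j ≤ lam' i := by
      intro i j h
      exact hanti i.succ j.succ (by simpa [Fin.succ_le_succ_iff] using h)
    have hbdd' : ∀ j : Fin m, 0 ≤ lam' j ∧ lam' j ≤ ((m + k : ℕ) + k : ℤ) := by
      intro j
      have hred : lam' j = lam j.succ := rfl
      have hm : 0 < m := j.pos
      set j1 : Fin (m + 1) := ⟨1, by omega⟩ with hj1
      have h1j : lam j.succ ≤ lam j1 :=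
        hanti j1 j.succ (by rw [Fin.le_def]; simp [hj1, Fin.val_succ])
      have h01 : lam j1 ≤ lam i0 := hanti i0 j1 (by rw [Fin.le_def]; simp [hj1, hi0])
      have hb0 := hbdd i0
      have hbj := hbdd j.succ
      rw [hred]
      refine ⟨hbj.1, ?_⟩
      by_contra hcon
      push_neg at hcon
      have hgt : (k : ℤ) < lam i0 := by push_cast at hcon h1j h01 hb0 ⊢; omega
      have hsl := hstrict i0 j1 (by simp [hi0, hj1]) hgt
      push_cast at hcon h1j h01 hb0 hsl ⊢
      omega
    have hstrict' : ∀ i j : Fin m, (i : ℕ) + 1 = (j : ℕ) →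
        (k : ℤ) < lam' i → lam' j < lam' i := by
      intro i j hij hk
      exact hstrict i.succ j.succ (by simp [Fin.val_succ]; omega) hk
    obtain ⟨P', ⟨hP'm, hP'r, hP'n⟩, hP'lam⟩ := ih k lam' hanti' hbdd' hstrict'
    -- the new first element
    have hb0 := hbdd i0
    set p1 : ℕ := ((n : ℤ) + k + 1 - lam i0).toNat with hp1def
    have hp1 : (p1 : ℤ) = (n : ℤ) + k + 1 - lam i0 := by
      rw [hp1def, Int.toNat_of_nonneg (by omega)]
    have hkn : k + 1 ≤ n := by omega
    have hp1b : 1 ≤ p1 ∧ p1 ≤ 2 * n := by omega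
    set c1 : ℕ := 2 * n + 1 - p1 with hc1def
    set a : ℕ := min p1 c1 with hadef
    set b : ℕ := max p1 c1 with hbdef
    have ha : a < b := by omega
    have hs : a + b = 2 * n + 1 := by omega
    have hor : p1 = a ∧ c1 = b ∨ p1 = b ∧ c1 = a := by omega
    -- key : p1 below all psi values
    have hgtall : ∀ i : Fin m, p1 < psi a b (P' i) := by
      intro i
      have hm : 0 < m := i.pos
      set z : Fin m := ⟨0, hm⟩ with hz
      set j1 : Fin (m + 1) := ⟨1, by omega⟩ with hj1
      have hzval : (P' z : ℤ) = (n : ℤ) + k - lam j1 := by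
        have h := congrFun hP'lam z
        rw [lamF_eq] at h
        have hc0 : cnt (m + k) P' z = 0 := by
          unfold cnt
          rw [Finset.card_eq_zero, Finset.filter_eq_empty_iff]
          rintro i' - ⟨hlt, -⟩
          rw [Fin.lt_def] at hlt
          simp [hz] at hlt
        have hsz : z.succ = j1 := by
          apply Fin.ext; simp [hz, hj1]
        rw [hc0] at h
        simp only [hlam', hsz] at h
        push_cast at h ⊢
        omega
      have hzi : psi a b (P' z) ≤ psi a b (P' i) :=
        psi_le_psi (hP'm.monotone (by rw [Fin.le_def]; simp [hz]))
      have h01 : lam j1 ≤ lam i0 := hanti i0 j1 (by rw [Fin.le_def]; simp [hj1, hi0])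
      rcases lt_or_ge (k : ℤ) (lam i0) with hcase | hcase
      · -- p1 ≤ n, a = p1
        have hstrict01 : lam j1 < lam i0 := hstrict i0 j1 (by simp [hi0, hj1]) hcase
        have hzp : a ≤ P' z := by omega
        have := psi_ge_of ha hzp
        omega
      · -- p1 ≥ n+1, b = p1
        have hbz : b ≤ P' z + 1 := by omega
        have := psi_high ha hbz
        omega
    refine ⟨Fin.cases p1 (fun i => psi a b (P' i)), ⟨?_, ?_, ?_⟩, ?_⟩
    · -- strict mono
      intro i j hij
      rcases Fin.eq_zero_or_eq_succ i with rfl | ⟨i', rfl⟩ <;>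
        rcases Fin.eq_zero_or_eq_succ j with rfl | ⟨j', rfl⟩
      · exact absurd hij (lt_irrefl _)
      · simpa using hgtall j'
      · exact absurd hij (by simp [Fin.lt_def])
      · simp only [Fin.cases_succ]
        exact psi_lt_psi (hP'm (by rwa [Fin.succ_lt_succ_iff] at hij))
    · -- range
      intro j
      rcases Fin.eq_zero_or_eq_succ j with rfl | ⟨j', rfl⟩
      · simp only [Fin.cases_zero]; omega
      · simp only [Fin.cases_succ]
        have h1 := (hP'r j').1
        have h2 := (hP'r j').2
        have := psi_ge (a := a) (b := b) (q := P' j')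
        have := psi_le (a := a) (b := b) (q := P' j')
        omega
    · -- no complementary pairs
      intro i j
      rcases Fin.eq_zero_or_eq_succ i with rfl | ⟨i', rfl⟩ <;>
        rcases Fin.eq_zero_or_eq_succ j with rfl | ⟨j', rfl⟩
      · simp only [Fin.cases_zero]; omega
      · simp only [Fin.cases_zero, Fin.cases_succ]
        have := psi_ne (q := P' j') ha
        omega
      · simp only [Fin.cases_zero, Fin.cases_succ]
        have := psi_ne (q := P' i') ha
        omega
      · simp only [Fin.cases_succ]
        exact psi_sum_ne ha hs (by have := hP'n i' j'; omega)
    · -- the lambda values match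
      funext j
      rcases Fin.eq_zero_or_eq_succ j with rfl | ⟨j', rfl⟩
      · rw [lamF_eq]
        have hc0 : cnt n (Fin.cases p1 (fun i => psi a b (P' i))) 0 = 0 := by
          unfold cnt
          rw [Finset.card_eq_zero, Finset.filter_eq_empty_iff]
          rintro i' - ⟨hlt, -⟩
          exact absurd hlt (Fin.not_lt_zero _)
        rw [hc0]
        simp only [Fin.cases_zero]
        rw [← hi0]
        omega
      · rw [lamF_eq]
        have hcnt : cnt n (Fin.cases p1 (fun i => psi a b (P' i))) j'.succ =
            (if c1 < psi a b (P' j') then 1 else 0) + cnt (m + k) P' j' := by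
          unfold cnt
          rw [Finset.card_filter, Finset.card_filter, Fin.sum_univ_succ]
          congr 1
          · simp only [Fin.cases_zero, Fin.cases_succ]
            refine if_congr ?_ rfl rfl
            constructor
            · rintro ⟨-, h⟩; omega
            · intro h; exact ⟨Fin.succ_pos _, by omega⟩
          · apply Finset.sum_congr rfl
            rintro i -
            simp only [Fin.cases_succ]
            refine if_congr ?_ rfl rfl
            have hiff := psi_sum_gt_iff (q := P' i) (q' := P' j') ha hs
              (hP'r i).1 (hP'r j').1 (by have := hP'n i j'; omega)
            rw [Fin.succ_lt_succ_iff]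
            constructor
            · rintro ⟨h1, h2⟩
              refine ⟨h1, ?_⟩
              have := hiff.1 h2
              omega
            · rintro ⟨h1, h2⟩
              exact ⟨h1, hiff.2 (by omega)⟩
        rw [hcnt]
        simp only [Fin.cases_succ]
        have hl := congrFun hP'lam j'
        rw [lamF_eq] at hl
        simp only [hlam'] at hl
        have hshift := psi_shift (q := P' j') ha hor (hgtall j')
        rw [← hl]
        rcases lt_or_ge c1 (psi a b (P' j')) with hcc | hcc
        · rw [if_pos hcc] at hshift ⊢
          push_cast
          omega
        · rw [if_neg (not_lt.2 hcc)] at hshift ⊢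
          push_cast
          omega

/-- **Index sets biject with `k`-strict partitions.**  With `m + k = n`, the map
sending an index set `P = {p_1 < ⋯ < p_m} ⊆ {1,…,2n}` (with `p_i + p_j ≠ 2n+1`)
to `λ_j = n+k+1−p_j + #{i < j : p_i + p_j > 2n+1}` is a bijection onto the set
`𝒫(k,n)` of `k`-strict partitions contained in an `m × (n+k)` rectangle. -/
theorem indexSet_partition_bijection (n m k : ℕ) (hmk : m + k = n) :
    Set.BijOn
      (fun (P : Fin m → ℕ) (j : Fin m) =>
        (n + k + 1 : ℤ) - P j +
          ((Finset.univ.filter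
            fun i : Fin m => i < j ∧ 2 * n + 1 < P i + P j).card : ℤ))
      {P : Fin m → ℕ | StrictMono P ∧ (∀ j, 1 ≤ P j ∧ P j ≤ 2 * n) ∧
        ∀ i j, P i + P j ≠ 2 * n + 1}
      {lam : Fin m → ℤ | (∀ i j : Fin m, i ≤ j → lam j ≤ lam i) ∧
        (∀ j, 0 ≤ lam j ∧ lam j ≤ (n + k : ℤ)) ∧
        (∀ i j : Fin m, (i : ℕ) + 1 = (j : ℕ) → (k : ℤ) < lam i → lam j < lam i)} := by
  subst hmk
  show Set.BijOn (lamF (m + k) k) _ _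
  refine ⟨?_, lamF_injOn rfl, ?_⟩
  · rintro P ⟨hmono, hrange, hne⟩
    refine ⟨lamF_anti rfl hmono hrange hne, fun j => ⟨lamF_nonneg rfl hmono hrange hne j, ?_⟩,
      lamF_strict rfl hmono hrange hne⟩
    have := lamF_le rfl hmono hrange hne j
    push_cast at this ⊢
    omega
  · rintro lam ⟨hanti, hbdd, hstrict⟩
    obtain ⟨P, ⟨h1, h2, h3⟩, h4⟩ := lamF_surj m k lam hanti
      (fun j => by have := hbdd j; push_cast at this ⊢; omega) hstrict
    exact ⟨P, ⟨h1, h2, h3⟩, h4⟩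
end Inj
end

section
/- Fix integers 0 ≤ m ≤ n and set k = n − m. Let P = {p_1 < ⋯ < p_m} ⊆ {1,…,2n} be an index set and let λ be the corresponding k-strict partition, defined by λ_j = n+k+1−p_j + #{i < j : p_i + p_j > 2n+1}. Then for all 1 ≤ i ≤ j ≤ m: (i) λ_j ≤ k if and only if p_j > n; (ii) λ_i + λ_j ≤ 2k + j − i if and only if p_i + p_j > 2n+1; and (iii) p_j = n+k+1−λ_j + #{i < j : λ_i + λ_j ≤ 2k + j − i}. -/
/-- **Translation between index sets and `k`-strict partitions (type C).**
Let `P = {p_1 < ⋯ < p_m} ⊆ {1,…,2n}` be an index set (so `p_i + p_j ≠ 2n+1`),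
with `m + k = n`, and let `λ_j = n+k+1−p_j + #{i < j : p_i + p_j > 2n+1}`.
Then for all `1 ≤ i ≤ j ≤ m`:
(i) `λ_j ≤ k ↔ p_j > n`;
(ii) `λ_i + λ_j ≤ 2k + j − i ↔ p_i + p_j > 2n+1`;
(iii) `p_j = n+k+1−λ_j + #{i < j : λ_i + λ_j ≤ 2k + j − i}`. -/
theorem indexSet_partition_translation (n m k : ℕ) (hmk : m + k = n)
    (P : Fin m → ℕ) (hmono : StrictMono P)
    (hrange : ∀ j, 1 ≤ P j ∧ P j ≤ 2 * n)
    (hidx : ∀ i j, P i + P j ≠ 2 * n + 1)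
    (lam : Fin m → ℤ)
    (hlam : ∀ j : Fin m, lam j = (n + k + 1 : ℤ) - P j +
      ((Finset.univ.filter fun i : Fin m => i < j ∧ 2 * n + 1 < P i + P j).card : ℤ))
    (i j : Fin m) (hij : i ≤ j) :
    (lam j ≤ (k : ℤ) ↔ (n : ℕ) < P j) ∧
    (lam i + lam j ≤ 2 * k + (j : ℤ) - (i : ℤ) ↔ 2 * n + 1 < P i + P j) ∧
    ((P j : ℤ) = (n + k + 1 : ℤ) - lam j +
      ((Finset.univ.filter
        fun i' : Fin m => i' < j ∧ lam i' + lam j ≤ 2 * k + (j : ℤ) - (i' : ℤ)).card : ℤ)) := by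
  classical
  have hPle : ∀ l, P l ≤ 2 * n := fun l => (hrange l).2
  have hP1 : ∀ l, 1 ≤ P l := fun l => (hrange l).1
  -- the "fold" map, injective thanks to the index-set condition
  set f : Fin m → ℕ := fun l => min (P l) (2 * n + 1 - P l) with hf
  have hfinj : Function.Injective f := by
    intro a b hab
    have h1 := hPle a; have h2 := hPle b
    have h3 := hidx a b
    have : P a = P b := by
      simp only [hf, min_def] at hab
      split_ifs at hab <;> omega
    exact hmono.injective this
  -- generic counting bound via the folded injection
  have cardb : ∀ (S : Finset (Fin m)) (q : ℕ),
      (∀ l ∈ S, P l < q ∧ 2 * n + 1 < P l + q) → S.card ≤ q - (n + 1) := by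
    intro S q hS
    have h := Finset.card_le_card_of_injOn (t := Finset.Icc (2 * n + 2 - q) n) f
      (fun l hl => by
        have h1 := (hS l hl).1
        have h2 := (hS l hl).2
        have h3 := hPle l
        simp only [Finset.mem_coe, Finset.mem_Icc, hf]
        omega)
      hfinj.injOn
    rw [Nat.card_Icc] at h
    omega
  -- generic counting bound via P itself
  have cardb2 : ∀ (S : Finset (Fin m)) (a b : ℕ),
      (∀ l ∈ S, a ≤ P l ∧ P l ≤ b) → S.card ≤ b + 1 - a := by
    intro S a b hS
    have h := Finset.card_le_card_of_injOn (t := Finset.Icc a b) P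
      (fun l hl => by simp only [Finset.mem_coe, Finset.mem_Icc]; exact hS l hl)
      hmono.injective.injOn
    rwa [Nat.card_Icc] at h
  have cardIco : ∀ a b : Fin m,
      (Finset.univ.filter fun l : Fin m => a ≤ l ∧ l < b).card = (b : ℕ) - (a : ℕ) := by
    intro a b
    have : (Finset.univ.filter fun l : Fin m => a ≤ l ∧ l < b) = Finset.Ico a b := by
      ext l; simp [Finset.mem_Ico]
    rw [this, Fin.card_Ico]
  -- splitting of the counting set for `b` at index `a`
  have hsplit : ∀ a b : Fin m, a ≤ b → 2 * n + 1 < P a + P b →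
      (Finset.univ.filter fun l : Fin m => l < b ∧ 2 * n + 1 < P l + P b)
        = (Finset.univ.filter fun l : Fin m => l < a ∧ 2 * n + 1 < P l + P b)
          ∪ (Finset.univ.filter fun l : Fin m => a ≤ l ∧ l < b) := by
    intro a b hab hsum
    ext l
    simp only [Finset.mem_filter, Finset.mem_union, Finset.mem_univ, true_and]
    constructor
    · rintro ⟨h1, h2⟩
      rcases lt_or_ge l a with h | h
      · exact Or.inl ⟨h, h2⟩
      · exact Or.inr ⟨h, h1⟩
    · rintro (⟨h1, h2⟩ | ⟨h1, h2⟩)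
      · exact ⟨h1.trans_le hab, h2⟩
      · have := hmono.le_iff_le.mpr h1
        exact ⟨h2, by omega⟩
  have hdisjPQ : ∀ (p q : Fin m → Prop) [DecidablePred p] [DecidablePred q] (a : Fin m),
      (∀ l, p l → l < a) → (∀ l, q l → a ≤ l) →
      Disjoint (Finset.univ.filter p) (Finset.univ.filter q) := by
    intro p q _ _ a hp hq
    rw [Finset.disjoint_left]
    intro l h1 h2
    simp only [Finset.mem_filter, Finset.mem_univ, true_and] at h1 h2
    exact absurd (hp l h1) (not_lt.mpr (hq l h2))
  -- F2 : upper bound in the "large sum" case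
  have F2 : ∀ a b : Fin m, a ≤ b → 2 * n + 1 < P a + P b →
      (Finset.univ.filter fun l : Fin m => l < a ∧ 2 * n + 1 < P l + P a).card
      + (Finset.univ.filter fun l : Fin m => l < b ∧ 2 * n + 1 < P l + P b).card
      + (2 * n + 2) ≤ P a + P b + ((b : ℕ) - (a : ℕ)) := by
    intro a b hab hsum
    have hPab : P a ≤ P b := hmono.le_iff_le.mpr hab
    have hdisj : Disjoint (Finset.univ.filter fun l : Fin m => l < a ∧ 2 * n + 1 < P l + P b)
        (Finset.univ.filter fun l : Fin m => a ≤ l ∧ l < b) :=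
      hdisjPQ _ _ a (fun l h => h.1) (fun l h => h.1)
    rw [hsplit a b hab hsum, Finset.card_union_of_disjoint hdisj, cardIco]
    have h2a := hPle a; have h2b := hPle b
    rcases le_or_gt (P a) n with hn | hn
    · -- small `P a` : the `a`-count is zero and the cross count fits in an interval
      have hS2 : (Finset.univ.filter fun l : Fin m => l < a ∧ 2 * n + 1 < P l + P a) = ∅ := by
        rw [Finset.filter_eq_empty_iff]
        rintro l - ⟨h1, h2⟩
        have := hmono h1
        omega
      have hS1 := cardb2 (Finset.univ.filter fun l : Fin m => l < a ∧ 2 * n + 1 < P l + P b)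
        (2 * n + 2 - P b) (P a - 1)
        (fun l hl => by
          simp only [Finset.mem_filter, Finset.mem_univ, true_and] at hl
          have := hmono hl.1
          exact ⟨by omega, by omega⟩)
      rw [hS2, Finset.card_empty]
      omega
    · -- large `P a` : both counts are bounded via the folded injection
      have hS2 := cardb (Finset.univ.filter fun l : Fin m => l < a ∧ 2 * n + 1 < P l + P a)
        (P a) (fun l hl => by
          simp only [Finset.mem_filter, Finset.mem_univ, true_and] at hl
          exact ⟨hmono hl.1, hl.2⟩)
      have hS1 := cardb (Finset.univ.filter fun l : Fin m => l < a ∧ 2 * n + 1 < P l + P b)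
        (P b) (fun l hl => by
          simp only [Finset.mem_filter, Finset.mem_univ, true_and] at hl
          exact ⟨lt_of_lt_of_le (hmono hl.1) (hmono.le_iff_le.mpr hab), hl.2⟩)
      omega
  -- F3 : lower bound in the "small sum" case
  have F3 : ∀ a b : Fin m, a ≤ b → P a + P b ≤ 2 * n →
      ((b : ℕ) - (a : ℕ)) + (P a + P b) ≤
        (Finset.univ.filter fun l : Fin m => l < b ∧ 2 * n + 1 < P l + P b).card
          + (2 * n + 1) := by
    intro a b hab hsum
    have hsub : (Finset.univ.filter fun l : Fin m => a ≤ l ∧ l < b ∧ 2 * n + 1 < P l + P b)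
        ⊆ Finset.univ.filter fun l : Fin m => l < b ∧ 2 * n + 1 < P l + P b := by
      intro l hl
      simp only [Finset.mem_filter, Finset.mem_univ, true_and] at hl ⊢
      exact ⟨hl.2.1, hl.2.2⟩
    have hsplit2 : (Finset.univ.filter fun l : Fin m => a ≤ l ∧ l < b)
        = (Finset.univ.filter fun l : Fin m => a ≤ l ∧ l < b ∧ 2 * n + 1 < P l + P b)
          ∪ (Finset.univ.filter fun l : Fin m => a ≤ l ∧ l < b ∧ ¬ 2 * n + 1 < P l + P b) := by
      ext l
      simp only [Finset.mem_filter, Finset.mem_union, Finset.mem_univ, true_and]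
      by_cases hc : 2 * n + 1 < P l + P b <;> tauto
    have hdisj2 : Disjoint
        (Finset.univ.filter fun l : Fin m => a ≤ l ∧ l < b ∧ 2 * n + 1 < P l + P b)
        (Finset.univ.filter fun l : Fin m => a ≤ l ∧ l < b ∧ ¬ 2 * n + 1 < P l + P b) := by
      rw [Finset.disjoint_left]
      intro l h1 h2
      simp only [Finset.mem_filter, Finset.mem_univ, true_and] at h1 h2
      exact absurd h1.2.2 h2.2.2
    have hT := cardb2
      (Finset.univ.filter fun l : Fin m => a ≤ l ∧ l < b ∧ ¬ 2 * n + 1 < P l + P b)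
      (P a) (2 * n - P b)
      (fun l hl => by
        simp only [Finset.mem_filter, Finset.mem_univ, true_and, not_lt] at hl
        have h1 : P a ≤ P l := hmono.le_iff_le.mpr hl.1
        have h2 := hidx l b
        exact ⟨h1, by omega⟩)
    have hIco := cardIco a b
    have hle := Finset.card_le_card hsub
    rw [hsplit2, Finset.card_union_of_disjoint hdisj2] at hIco
    have h1 := hP1 a; have h2 := hP1 b
    omega
  -- part (ii), stated for arbitrary pairs
  have key2 : ∀ a b : Fin m, a ≤ b →
      (lam a + lam b ≤ 2 * k + (b : ℤ) - (a : ℤ) ↔ 2 * n + 1 < P a + P b) := by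
    intro a b hab
    have hvab : (a : ℕ) ≤ (b : ℕ) := hab
    have hcb : ((b : Fin m) : ℤ) = ((b : ℕ) : ℤ) := rfl
    have hca : ((a : Fin m) : ℤ) = ((a : ℕ) : ℤ) := rfl
    rw [hlam a, hlam b]
    constructor
    · intro h
      by_contra hlt
      push_neg at hlt
      have hne := hidx a b
      have hF3 := F3 a b hab (by omega)
      omega
    · intro h
      have hF2 := F2 a b hab h
      omega
  refine ⟨?_, key2 i j hij, ?_⟩
  · -- part (i)
    have hCj := cardb (Finset.univ.filter fun l : Fin m => l < j ∧ 2 * n + 1 < P l + P j)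
      (P j) (fun l hl => by
        simp only [Finset.mem_filter, Finset.mem_univ, true_and] at hl
        exact ⟨hmono hl.1, hl.2⟩)
    rw [hlam j]
    omega
  · -- part (iii)
    have hsetEq : (Finset.univ.filter
        fun i' : Fin m => i' < j ∧ lam i' + lam j ≤ 2 * k + (j : ℤ) - (i' : ℤ))
        = Finset.univ.filter fun i' : Fin m => i' < j ∧ 2 * n + 1 < P i' + P j :=
      Finset.filter_congr fun x _ => and_congr_right fun hx => key2 x j hx.le
    rw [hsetEq]
    have := hlam j
    omega
end

section
/- Fix integers 0 ≤ m ≤ n, set k = n − m, and let λ ∈ 𝒫(k,n). Define the sequence λ^∨ by λ^∨_{m+1−j} = 2k + 1 − λ_j + #{i < j : λ_i + λ_j ≤ 2k + j − i} + #{i > j : λ_i + λ_j > 2k + i − j} for 1 ≤ j ≤ m. Then λ^∨ is again an element of 𝒫(k,n), and p_j(λ^∨) = 2n + 1 − p_{m+1−j}(λ) for all 1 ≤ j ≤ m, where for any μ ∈ 𝒫(k,n) one sets p_j(μ) = n+k+1−μ_j + #{i < j : μ_i + μ_j ≤ 2k + j − i}. -/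
namespace DualPartitionAux


/-- stepwise gap implies general gap -/
lemma gap_aux {m : ℕ} (f : Fin m → ℤ)
    (h : ∀ i j : Fin m, (i : ℕ) + 1 = (j : ℕ) → f i + 1 ≤ f j) :
    ∀ (t : ℕ) (i j : Fin m), (i : ℕ) + t = (j : ℕ) → f i + t ≤ f j := by
  intro t
  induction t with
  | zero =>
    intro i j hij
    have : i = j := Fin.ext (by omega)
    simp [this]
  | succ t ih =>
    intro i j hij
    have hjm : (i : ℕ) + t < m := by omega
    have h1 := ih i ⟨(i : ℕ) + t, hjm⟩ rfl
    have h2 := h ⟨(i : ℕ) + t, hjm⟩ j (by simp; omega)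
    push_cast
    push_cast at h1
    linarith

lemma mono_aux {m : ℕ} (f : Fin m → ℤ)
    (h : ∀ i j : Fin m, (i : ℕ) + 1 = (j : ℕ) → f i ≤ f j) :
    ∀ (t : ℕ) (i j : Fin m), (i : ℕ) + t = (j : ℕ) → f i ≤ f j := by
  intro t
  induction t with
  | zero =>
    intro i j hij
    have : i = j := Fin.ext (by omega)
    simp [this]
  | succ t ih =>
    intro i j hij
    have hjm : (i : ℕ) + t < m := by omega
    have h1 := ih i ⟨(i : ℕ) + t, hjm⟩ rfl
    have h2 := h ⟨(i : ℕ) + t, hjm⟩ j (by simp; omega)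
    linarith

lemma lam_gap {m k : ℕ} {lam : Fin m → ℤ}
    (hdec : ∀ i j : Fin m, i ≤ j → lam j ≤ lam i)
    (hstrict : ∀ i j : Fin m, (i : ℕ) + 1 = (j : ℕ) → (k : ℤ) < lam i → lam j < lam i) :
    ∀ (t : ℕ) (i j : Fin m), (i : ℕ) + t = (j : ℕ) → (k : ℤ) < lam j → lam j + t ≤ lam i := by
  intro t
  induction t with
  | zero =>
    intro i j hij _
    have : i = j := Fin.ext (by omega)
    simp [this]
  | succ t ih =>
    intro i j hij hk
    have hjm : (i : ℕ) + t < m := by omega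
    set j' : Fin m := ⟨(i : ℕ) + t, hjm⟩ with hj'
    have hle : j' ≤ j := by simp [Fin.le_def, hj']; omega
    have h1 : lam j ≤ lam j' := hdec j' j hle
    have hk' : (k : ℤ) < lam j' := lt_of_lt_of_le hk h1
    have h2 := hstrict j' j (by simp [hj']; omega) hk'
    have h3 := ih i j' rfl hk'
    push_cast
    linarith

variable {m n k : ℕ} {lam : Fin m → ℤ}

def Afun (k : ℕ) (lam : Fin m → ℤ) (j : Fin m) : ℕ :=
  (Finset.univ.filter
    fun i : Fin m => i < j ∧ lam i + lam j ≤ 2 * k + (j : ℤ) - (i : ℤ)).card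

def Pfun (n k : ℕ) (lam : Fin m → ℤ) (j : Fin m) : ℤ :=
  (n : ℤ) + k + 1 - lam j + (Afun k lam j : ℤ)

lemma klt_of_rel (hdec : ∀ i j : Fin m, i ≤ j → lam j ≤ lam i) {i j : Fin m} (hij : i < j)
    (hrel : 2 * k + (j : ℤ) - (i : ℤ) < lam i + lam j) : (k : ℤ) < lam i := by
  have h1 : lam j ≤ lam i := hdec i j (le_of_lt hij)
  have h2 : (i : ℕ) < (j : ℕ) := hij
  have : (i : ℤ) < (j : ℤ) := by exact_mod_cast h2
  linarith

variable (hdec : ∀ i j : Fin m, i ≤ j → lam j ≤ lam i)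
  (hstrict : ∀ i j : Fin m, (i : ℕ) + 1 = (j : ℕ) → (k : ℤ) < lam i → lam j < lam i)

include hdec hstrict in
lemma rel_mono_left {h i j : Fin m} (hhi : h ≤ i) (hij : i < j)
    (hrel : 2 * k + (j : ℤ) - (i : ℤ) < lam i + lam j) :
    2 * k + (j : ℤ) - (h : ℤ) < lam h + lam j := by
  have hk : (k : ℤ) < lam i := klt_of_rel hdec hij hrel
  have hvhi : (h : ℕ) ≤ (i : ℕ) := hhi
  have hg := lam_gap hdec hstrict ((i : ℕ) - (h : ℕ)) h i (by omega) hk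
  have hc : (((i : ℕ) - (h : ℕ) : ℕ) : ℤ) = (i : ℤ) - (h : ℤ) := by omega
  rw [hc] at hg
  linarith

include hdec hstrict in
lemma rel_of_klt {h i : Fin m} (hhi : h < i) (hk : (k : ℤ) < lam i) :
    2 * k + (i : ℤ) - (h : ℤ) < lam h + lam i := by
  have hvhi : (h : ℕ) < (i : ℕ) := hhi
  have hg := lam_gap hdec hstrict ((i : ℕ) - (h : ℕ)) h i (by omega) hk
  have hc : (((i : ℕ) - (h : ℕ) : ℕ) : ℤ) = (i : ℤ) - (h : ℤ) := by omega
  rw [hc] at hg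
  have hd : lam i ≤ lam h := hdec h i (le_of_lt hhi)
  have : 1 ≤ (i : ℤ) - (h : ℤ) := by omega
  linarith

include hdec hstrict in
lemma Afun_eq_zero {i : Fin m} (hk : (k : ℤ) < lam i) : Afun k lam i = 0 := by
  unfold Afun
  rw [Finset.card_eq_zero, Finset.filter_eq_empty_iff]
  rintro h - ⟨hhi, hun⟩
  exact absurd hun (not_le.mpr (rel_of_klt hdec hstrict hhi hk))

include hdec hstrict in
/-- related pairs: p_i + p_j ≤ 2n -/
lemma p_rel {i j : Fin m} (hij : i < j)
    (hrel : 2 * k + (j : ℤ) - (i : ℤ) < lam i + lam j) :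
    Pfun n k lam i + Pfun n k lam j ≤ 2 * n := by
  have hAi : Afun k lam i = 0 :=
    Afun_eq_zero hdec hstrict (klt_of_rel hdec hij hrel)
  have hvij : (i : ℕ) < (j : ℕ) := hij
  have hAj : (Afun k lam j : ℤ) ≤ (j : ℤ) - (i : ℤ) - 1 := by
    have hsub : (Finset.univ.filter
        fun h : Fin m => h < j ∧ lam h + lam j ≤ 2 * k + (j : ℤ) - (h : ℤ)) ⊆
        Finset.Ioo i j := by
      intro h hh
      simp only [Finset.mem_filter, Finset.mem_univ, true_and] at hh
      obtain ⟨hhj, hun⟩ := hh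
      rw [Finset.mem_Ioo]
      refine ⟨?_, hhj⟩
      by_contra hle
      push_neg at hle
      exact absurd hun (not_le.mpr (rel_mono_left hdec hstrict hle hij hrel))
    have hcc := Finset.card_le_card hsub
    rw [Fin.card_Ioo] at hcc
    unfold Afun
    omega
  unfold Pfun
  rw [hAi]
  push_cast
  linarith

include hdec hstrict in
/-- unrelated pairs: p_i + p_j ≥ 2n+2 -/
lemma p_unrel {i j : Fin m} (hij : i < j)
    (hun : lam i + lam j ≤ 2 * k + (j : ℤ) - (i : ℤ)) :
    2 * (n : ℤ) + 2 ≤ Pfun n k lam i + Pfun n k lam j := by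
  have hvij : (i : ℕ) < (j : ℕ) := hij
  have hAj : (j : ℤ) - (i : ℤ) ≤ (Afun k lam j : ℤ) := by
    have hsub : Finset.Ico i j ⊆ (Finset.univ.filter
        fun h : Fin m => h < j ∧ lam h + lam j ≤ 2 * k + (j : ℤ) - (h : ℤ)) := by
      intro h hh
      rw [Finset.mem_Ico] at hh
      obtain ⟨hih, hhj⟩ := hh
      simp only [Finset.mem_filter, Finset.mem_univ, true_and]
      refine ⟨hhj, ?_⟩
      by_contra hrel
      push_neg at hrel
      exact absurd hun (not_le.mpr (rel_mono_left hdec hstrict hih hhj hrel))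
    have hcc := Finset.card_le_card hsub
    rw [Fin.card_Ico] at hcc
    unfold Afun
    omega
  have hAi : (0 : ℤ) ≤ (Afun k lam i : ℤ) := by positivity
  unfold Pfun
  linarith




include hdec hstrict in
lemma p_step {i j : Fin m} (hij : (i : ℕ) + 1 = (j : ℕ)) :
    Pfun n k lam i + 1 ≤ Pfun n k lam j := by
  have hij' : i < j := by rw [Fin.lt_def]; omega
  have hvij : (i : ℕ) < (j : ℕ) := hij'
  have hzij : (i : ℤ) + 1 = (j : ℤ) := by omega
  have hsub : (Finset.univ.filter
      fun h : Fin m => h < i ∧ lam h + lam i ≤ 2 * k + (i : ℤ) - (h : ℤ)) ⊆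
      (Finset.univ.filter
      fun h : Fin m => h < j ∧ lam h + lam j ≤ 2 * k + (j : ℤ) - (h : ℤ)) := by
    intro h hh
    simp only [Finset.mem_filter, Finset.mem_univ, true_and] at hh ⊢
    obtain ⟨hhi, hun⟩ := hh
    have : lam j ≤ lam i := hdec i j (le_of_lt hij')
    exact ⟨lt_trans hhi hij', by linarith⟩
  by_cases hrel : 2 * k + (j : ℤ) - (i : ℤ) < lam i + lam j
  · -- related: strict decrease of lam
    have hk : (k : ℤ) < lam i := klt_of_rel hdec hij' hrel
    have hs := hstrict i j hij hk
    have hA : (Afun k lam i : ℤ) ≤ (Afun k lam j : ℤ) := by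
      have := Finset.card_le_card hsub
      unfold Afun
      omega
    unfold Pfun
    linarith
  · push_neg at hrel
    have hmem : i ∈ (Finset.univ.filter
        fun h : Fin m => h < j ∧ lam h + lam j ≤ 2 * k + (j : ℤ) - (h : ℤ)) := by
      simp only [Finset.mem_filter, Finset.mem_univ, true_and]
      exact ⟨hij', hrel⟩
    have hnot : i ∉ (Finset.univ.filter
        fun h : Fin m => h < i ∧ lam h + lam i ≤ 2 * k + (i : ℤ) - (h : ℤ)) := by
      simp only [Finset.mem_filter, Finset.mem_univ, true_and]
      rintro ⟨hc, -⟩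
      exact absurd hc (lt_irrefl i)
    have hins : insert i (Finset.univ.filter
        fun h : Fin m => h < i ∧ lam h + lam i ≤ 2 * k + (i : ℤ) - (h : ℤ)) ⊆
        (Finset.univ.filter
        fun h : Fin m => h < j ∧ lam h + lam j ≤ 2 * k + (j : ℤ) - (h : ℤ)) := by
      rw [Finset.insert_subset_iff]
      exact ⟨hmem, hsub⟩
    have hcard := Finset.card_le_card hins
    rw [Finset.card_insert_of_notMem hnot] at hcard
    have hA : (Afun k lam i : ℤ) + 1 ≤ (Afun k lam j : ℤ) := by
      unfold Afun
      omega
    have : lam j ≤ lam i := hdec i j (le_of_lt hij')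
    unfold Pfun
    linarith

include hdec hstrict in
lemma p_gap {i j : Fin m} (hij : i ≤ j) :
    Pfun n k lam i + ((j : ℤ) - (i : ℤ)) ≤ Pfun n k lam j := by
  have hvij : (i : ℕ) ≤ (j : ℕ) := hij
  have := gap_aux (Pfun n k lam) (fun a b hab => p_step hdec hstrict hab)
    ((j : ℕ) - (i : ℕ)) i j (by omega)
  have hc : (((j : ℕ) - (i : ℕ) : ℕ) : ℤ) = (j : ℤ) - (i : ℤ) := by omega
  rw [hc] at this
  linarith

lemma p_lb (hbd : ∀ j, 0 ≤ lam j ∧ lam j ≤ (n + k : ℤ)) (j : Fin m) :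
    1 ≤ Pfun n k lam j := by
  have h1 := (hbd j).2
  have h2 : (0 : ℤ) ≤ (Afun k lam j : ℤ) := by positivity
  unfold Pfun
  push_cast at h1
  linarith

lemma Afun_le (j : Fin m) : Afun k lam j ≤ (j : ℕ) := by
  have hsub : (Finset.univ.filter
      fun h : Fin m => h < j ∧ lam h + lam j ≤ 2 * k + (j : ℤ) - (h : ℤ)) ⊆
      Finset.Iio j := by
    intro h hh
    simp only [Finset.mem_filter, Finset.mem_univ, true_and] at hh
    rw [Finset.mem_Iio]
    exact hh.1
  have := Finset.card_le_card hsub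
  rwa [Fin.card_Iio] at this

lemma p_ub (hmk : m + k = n) (hbd : ∀ j, 0 ≤ lam j ∧ lam j ≤ (n + k : ℤ)) (j : Fin m) :
    Pfun n k lam j ≤ 2 * n := by
  have h1 := (hbd j).1
  have h2 := Afun_le (k := k) (lam := lam) j
  have h3 : (j : ℕ) < m := j.isLt
  unfold Pfun
  omega

def Qfun (n k : ℕ) (lam : Fin m → ℤ) (j : Fin m) : ℤ :=
  2 * (n : ℤ) + 1 - Pfun n k lam j.rev

lemma rev_cast (j : Fin m) : ((j.rev : ℕ) : ℤ) = (m : ℤ) - 1 - ((j : ℕ) : ℤ) := by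
  have h1 : (j.rev : ℕ) = m - ((j : ℕ) + 1) := Fin.val_rev j
  have h2 : (j : ℕ) < m := j.isLt
  omega

include hdec hstrict in
lemma q_gap {i j : Fin m} (hij : i ≤ j) :
    Qfun n k lam i + ((j : ℤ) - (i : ℤ)) ≤ Qfun n k lam j := by
  have hrev : j.rev ≤ i.rev := Fin.rev_le_rev.mpr hij
  have hg := p_gap (n:=n) hdec hstrict hrev
  have h1 := rev_cast i
  have h2 := rev_cast j
  rw [h1, h2] at hg
  unfold Qfun
  linarith

include hdec hstrict in
lemma q_strict {i j : Fin m} (hij : i < j) : Qfun n k lam i < Qfun n k lam j := by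
  have := q_gap (n:=n) hdec hstrict (le_of_lt hij)
  have hv : (i : ℕ) < (j : ℕ) := hij
  have : (i : ℤ) < (j : ℤ) := by omega
  linarith [q_gap (n:=n) hdec hstrict (le_of_lt hij)]

lemma q_lb (hmk : m + k = n) (hbd : ∀ j, 0 ≤ lam j ∧ lam j ≤ (n + k : ℤ)) (j : Fin m) :
    1 ≤ Qfun n k lam j := by
  have := p_ub hmk hbd (lam := lam) j.rev
  unfold Qfun
  linarith

lemma q_ub (hbd : ∀ j, 0 ≤ lam j ∧ lam j ≤ (n + k : ℤ)) (j : Fin m) :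
    Qfun n k lam j ≤ 2 * n := by
  have := p_lb hbd (lam := lam) j.rev
  unfold Qfun
  linarith

include hdec hstrict in
lemma q_dichot {i j : Fin m} (hij : i < j) :
    (2 * (n : ℤ) + 1 < Qfun n k lam i + Qfun n k lam j ↔
      2 * k + ((i.rev : Fin m) : ℤ) - ((j.rev : Fin m) : ℤ) < lam j.rev + lam i.rev) ∧
    (Qfun n k lam i + Qfun n k lam j ≤ 2 * n ∨
      2 * (n : ℤ) + 2 ≤ Qfun n k lam i + Qfun n k lam j) := by
  have hrev : j.rev < i.rev := Fin.rev_lt_rev.mpr hij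
  by_cases hrel : 2 * k + ((i.rev : Fin m) : ℤ) - ((j.rev : Fin m) : ℤ) <
      lam j.rev + lam i.rev
  · have := p_rel (n:=n) hdec hstrict hrev hrel
    unfold Qfun
    constructor
    · constructor
      · intro _; exact hrel
      · intro _; linarith
    · right; linarith
  · push_neg at hrel
    have := p_unrel (n:=n) hdec hstrict hrev hrel
    unfold Qfun
    constructor
    · constructor
      · intro hc; linarith
      · intro hc; exact absurd hc (not_lt.mpr hrel)
    · left; linarith

def Cfun (n k : ℕ) (lam : Fin m → ℤ) (j : Fin m) : ℕ :=
  (Finset.univ.filter fun i : Fin m =>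
    i < j ∧ 2 * (n : ℤ) + 1 < Qfun n k lam i + Qfun n k lam j).card

include hdec hstrict in
lemma C_ub (j : Fin m) :
    Cfun n k lam j ≤ (Qfun n k lam j - (n : ℤ) - 1).toNat := by
  classical
  have hcard : (Finset.univ.filter fun i : Fin m =>
      i < j ∧ 2 * (n : ℤ) + 1 < Qfun n k lam i + Qfun n k lam j).card ≤
      (Finset.Ioc (2 * (n : ℤ) + 1 - Qfun n k lam j) (n : ℤ)).card := by
    apply Finset.card_le_card_of_injOn
      (fun i => min (Qfun n k lam i) (2 * (n : ℤ) + 1 - Qfun n k lam i))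
    · intro a ha
      simp only [Finset.mem_coe, Finset.mem_filter, Finset.mem_univ, true_and] at ha
      obtain ⟨haj, hsum⟩ := ha
      have h1 : Qfun n k lam a < Qfun n k lam j := q_strict (n := n) hdec hstrict haj
      simp only [Finset.mem_coe, Finset.mem_Ioc]
      omega
    · intro a ha b hb hab
      simp only [Finset.coe_filter, Set.mem_setOf_eq, Finset.mem_univ, true_and] at ha hb
      simp only at hab
      by_contra hne
      have hne' : a ≠ b := hne
      rcases lt_or_gt_of_ne hne' with h | h
      · have hs := q_strict (n := n) hdec hstrict h
        have hd := (q_dichot (n := n) hdec hstrict h).2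
        omega
      · have hs := q_strict (n := n) hdec hstrict h
        have hd := (q_dichot (n := n) hdec hstrict h).2
        omega
  rw [Int.card_Ioc] at hcard
  unfold Cfun
  omega

lemma C_le_j (j : Fin m) : Cfun n k lam j ≤ (j : ℕ) := by
  have hsub : (Finset.univ.filter fun i : Fin m =>
      i < j ∧ 2 * (n : ℤ) + 1 < Qfun n k lam i + Qfun n k lam j) ⊆ Finset.Iio j := by
    intro h hh
    simp only [Finset.mem_filter, Finset.mem_univ, true_and] at hh
    rw [Finset.mem_Iio]
    exact hh.1
  have := Finset.card_le_card hsub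
  rw [Fin.card_Iio] at this
  exact this

include hdec hstrict in
lemma C_zero {j : Fin m} (hq : Qfun n k lam j ≤ (n : ℤ)) : Cfun n k lam j = 0 := by
  unfold Cfun
  rw [Finset.card_eq_zero, Finset.filter_eq_empty_iff]
  rintro i - ⟨hij, hsum⟩
  have := q_strict (n := n) hdec hstrict hij
  omega

include hdec hstrict in
lemma q_le_high (hmk : m + k = n) (hbd : ∀ j, 0 ≤ lam j ∧ lam j ≤ (n + k : ℤ)) (j : Fin m) :
    Qfun n k lam j ≤ (n : ℤ) + k + 1 + (j : ℕ) := by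
  have hm : 0 < m := j.pos
  have hle : j ≤ (⟨m - 1, by omega⟩ : Fin m) := by
    rw [Fin.le_def]; simp; omega
  have hg := q_gap (n := n) hdec hstrict hle
  have hub := q_ub hbd (lam := lam) (⟨m - 1, by omega⟩ : Fin m)
  simp only [Fin.val_mk] at hg
  omega

include hdec hstrict in
lemma C_lb (hmk : m + k = n) (hbd : ∀ j, 0 ≤ lam j ∧ lam j ≤ (n + k : ℤ)) (j : Fin m) :
    Qfun n k lam j - (n : ℤ) - k - 1 ≤ (Cfun n k lam j : ℤ) := by
  -- split Iio j into related and unrelated parts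
  have hsplit : Cfun n k lam j +
      (Finset.univ.filter fun i : Fin m =>
      i < j ∧ ¬ (2 * (n : ℤ) + 1 < Qfun n k lam i + Qfun n k lam j)).card = (j : ℕ) := by
    unfold Cfun
    rw [← Fin.card_Iio (n := m) j]
    have e1 : (Finset.univ.filter fun i : Fin m =>
        i < j ∧ 2 * (n : ℤ) + 1 < Qfun n k lam i + Qfun n k lam j) =
        (Finset.Iio j).filter fun i =>
          2 * (n : ℤ) + 1 < Qfun n k lam i + Qfun n k lam j := by
      ext i
      simp [Finset.mem_filter, Finset.mem_Iio, and_comm]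
    have e2 : (Finset.univ.filter fun i : Fin m =>
        i < j ∧ ¬ (2 * (n : ℤ) + 1 < Qfun n k lam i + Qfun n k lam j)) =
        (Finset.Iio j).filter fun i =>
          ¬ (2 * (n : ℤ) + 1 < Qfun n k lam i + Qfun n k lam j) := by
      ext i
      simp [Finset.mem_filter, Finset.mem_Iio, and_comm]
    rw [e1, e2]
    exact Finset.card_filter_add_card_filter_not _
  -- the unrelated part together with Ioi j injects into [1, 2n - q_j]
  have hbig : ((Finset.univ.filter fun i : Fin m =>
      i < j ∧ ¬ (2 * (n : ℤ) + 1 < Qfun n k lam i + Qfun n k lam j)) ∪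
      Finset.Ioi j).card ≤
      (Finset.Icc (1 : ℤ) (2 * (n : ℤ) - Qfun n k lam j)).card := by
    apply Finset.card_le_card_of_injOn
      (fun i => if i < j then Qfun n k lam i else 2 * (n : ℤ) + 1 - Qfun n k lam i)
    · intro a ha
      rw [Finset.mem_coe, Finset.mem_union] at ha
      simp only [Finset.mem_coe, Finset.mem_Icc]
      rcases ha with ha | ha
      · simp only [Finset.mem_filter, Finset.mem_univ, true_and] at ha
        obtain ⟨haj, hun⟩ := ha
        rw [if_pos haj]
        push_neg at hun
        have hd := (q_dichot (n := n) hdec hstrict haj).2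
        have hlb := q_lb hmk hbd (lam := lam) a
        omega
      · rw [Finset.mem_Ioi] at ha
        rw [if_neg (by exact not_lt.mpr (le_of_lt ha))]
        have hs := q_strict (n := n) hdec hstrict ha
        have hub := q_ub hbd (lam := lam) a
        omega
    · intro a ha b hb hab
      simp only at hab
      rw [Finset.coe_union] at ha hb
      by_contra hne
      have hne' : a ≠ b := hne
      -- helper facts
      have key : ∀ x y : Fin m, x < y → Qfun n k lam x + Qfun n k lam y ≠ 2 * (n : ℤ) + 1 := by
        intro x y hxy
        have := (q_dichot (n := n) hdec hstrict hxy).2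
        omega
      have hinj : ∀ x y : Fin m, x ≠ y → Qfun n k lam x ≠ Qfun n k lam y := by
        intro x y hxy
        rcases lt_or_gt_of_ne hxy with h | h
        · exact ne_of_lt (q_strict (n := n) hdec hstrict h)
        · exact (ne_of_lt (q_strict (n := n) hdec hstrict h)).symm
      by_cases haj : a < j <;> by_cases hbj : b < j
      · rw [if_pos haj, if_pos hbj] at hab
        exact hinj a b hne' hab
      · rw [if_pos haj, if_neg hbj] at hab
        have habf : a < b := lt_of_lt_of_le haj (not_lt.mp hbj)
        exact key a b habf (by omega)
      · rw [if_neg haj, if_pos hbj] at hab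
        have habf : b < a := lt_of_lt_of_le hbj (not_lt.mp haj)
        exact key b a habf (by omega)
      · rw [if_neg haj, if_neg hbj] at hab
        exact hinj a b hne' (by omega)
  have hdisj : Disjoint (Finset.univ.filter fun i : Fin m =>
      i < j ∧ ¬ (2 * (n : ℤ) + 1 < Qfun n k lam i + Qfun n k lam j)) (Finset.Ioi j) := by
    rw [Finset.disjoint_left]
    intro a ha hb
    simp only [Finset.mem_filter, Finset.mem_univ, true_and] at ha
    rw [Finset.mem_Ioi] at hb
    exact absurd ha.1 (not_lt.mpr (le_of_lt hb))
  rw [Finset.card_union_of_disjoint hdisj, Fin.card_Ioi, Int.card_Icc] at hbig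
  have hjv : (j : ℕ) < m := j.isLt
  have hub := q_ub hbd (lam := lam) j
  omega

include hdec hstrict in
lemma C_mono {j j' : Fin m} (hjj : (j : ℕ) + 1 = (j' : ℕ)) :
    (Cfun n k lam j' : ℤ) ≤ (Cfun n k lam j : ℤ) +
      (Qfun n k lam j' - Qfun n k lam j) := by
  classical
  have hlt : j < j' := by rw [Fin.lt_def]; omega
  have hqlt : Qfun n k lam j < Qfun n k lam j' := q_strict (n := n) hdec hstrict hlt
  have hsub : (Finset.univ.filter fun i : Fin m =>
      i < j' ∧ 2 * (n : ℤ) + 1 < Qfun n k lam i + Qfun n k lam j') ⊆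
      insert j ((Finset.univ.filter fun i : Fin m =>
        i < j ∧ 2 * (n : ℤ) + 1 < Qfun n k lam i + Qfun n k lam j) ∪
        (Finset.univ.filter fun i : Fin m =>
        i < j ∧ Qfun n k lam i + Qfun n k lam j ≤ 2 * (n : ℤ) + 1 ∧
          2 * (n : ℤ) + 1 < Qfun n k lam i + Qfun n k lam j')) := by
    intro i hi
    simp only [Finset.mem_filter, Finset.mem_univ, true_and] at hi
    obtain ⟨hij', hsum⟩ := hi
    rw [Finset.mem_insert]
    by_cases hij : i = j
    · left; exact hij
    right
    have hvi : (i : ℕ) < (j' : ℕ) := hij'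
    have hvij : (i : ℕ) < (j : ℕ) := by
      have : (i : ℕ) ≠ (j : ℕ) := fun hc => hij (Fin.ext hc)
      omega
    have hiltj : i < j := by rw [Fin.lt_def]; omega
    rw [Finset.mem_union]
    by_cases hc : 2 * (n : ℤ) + 1 < Qfun n k lam i + Qfun n k lam j
    · left
      simp only [Finset.mem_filter, Finset.mem_univ, true_and]
      exact ⟨hiltj, hc⟩
    · right
      simp only [Finset.mem_filter, Finset.mem_univ, true_and]
      push_neg at hc
      exact ⟨hiltj, hc, hsum⟩
  have hHcard : ((Finset.univ.filter fun i : Fin m =>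
      i < j ∧ Qfun n k lam i + Qfun n k lam j ≤ 2 * (n : ℤ) + 1 ∧
        2 * (n : ℤ) + 1 < Qfun n k lam i + Qfun n k lam j').card : ℤ) ≤
      Qfun n k lam j' - Qfun n k lam j - 1 := by
    have hinj : (Finset.univ.filter fun i : Fin m =>
        i < j ∧ Qfun n k lam i + Qfun n k lam j ≤ 2 * (n : ℤ) + 1 ∧
          2 * (n : ℤ) + 1 < Qfun n k lam i + Qfun n k lam j').card ≤
        (Finset.Ioo (2 * (n : ℤ) + 1 - Qfun n k lam j')
          (2 * (n : ℤ) + 1 - Qfun n k lam j)).card := by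
      apply Finset.card_le_card_of_injOn (Qfun n k lam)
      · intro a ha
        simp only [Finset.mem_coe, Finset.mem_filter, Finset.mem_univ, true_and] at ha
        obtain ⟨haj, hle, hlt2⟩ := ha
        rw [Finset.mem_coe, Finset.mem_Ioo]
        have hd := (q_dichot (n := n) hdec hstrict haj).2
        omega
      · intro a ha b hb hab
        by_contra hne
        rcases lt_or_gt_of_ne (show a ≠ b from hne) with h | h
        · exact absurd hab (ne_of_lt (q_strict (n := n) hdec hstrict h))
        · exact absurd hab.symm (ne_of_lt (q_strict (n := n) hdec hstrict h))
    rw [Int.card_Ioo] at hinj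
    omega
  have hcard := Finset.card_le_card hsub
  have h1 := Finset.card_insert_le j
    ((Finset.univ.filter fun i : Fin m =>
        i < j ∧ 2 * (n : ℤ) + 1 < Qfun n k lam i + Qfun n k lam j) ∪
        (Finset.univ.filter fun i : Fin m =>
        i < j ∧ Qfun n k lam i + Qfun n k lam j ≤ 2 * (n : ℤ) + 1 ∧
          2 * (n : ℤ) + 1 < Qfun n k lam i + Qfun n k lam j'))
  have h2 := Finset.card_union_le
    (Finset.univ.filter fun i : Fin m =>
        i < j ∧ 2 * (n : ℤ) + 1 < Qfun n k lam i + Qfun n k lam j)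
    (Finset.univ.filter fun i : Fin m =>
        i < j ∧ Qfun n k lam i + Qfun n k lam j ≤ 2 * (n : ℤ) + 1 ∧
          2 * (n : ℤ) + 1 < Qfun n k lam i + Qfun n k lam j')
  unfold Cfun
  omega

include hdec hstrict in
lemma C_eq_B (j : Fin m) :
    Cfun n k lam j = (Finset.univ.filter
      fun i : Fin m => j.rev < i ∧
        2 * k + (i : ℤ) - ((j.rev : Fin m) : ℤ) < lam i + lam j.rev).card := by
  apply Finset.card_bij (fun i _ => i.rev)
  · intro a ha
    simp only [Finset.mem_filter, Finset.mem_univ, true_and] at ha ⊢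
    obtain ⟨haj, hsum⟩ := ha
    have hd := ((q_dichot (n := n) hdec hstrict haj).1).mp hsum
    exact ⟨Fin.rev_lt_rev.mpr haj, by linarith⟩
  · intro a ha b hb hab
    exact Fin.rev_injective hab
  · intro b hb
    simp only [Finset.mem_filter, Finset.mem_univ, true_and] at hb
    obtain ⟨hjb, hcond⟩ := hb
    refine ⟨b.rev, ?_, Fin.rev_rev b⟩
    simp only [Finset.mem_filter, Finset.mem_univ, true_and]
    have hbj : b.rev < j := by
      have := Fin.rev_lt_rev.mpr hjb
      rwa [Fin.rev_rev] at this
    refine ⟨hbj, ?_⟩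
    apply ((q_dichot (n := n) hdec hstrict hbj).1).mpr
    rw [Fin.rev_rev]
    linarith

include hdec hstrict in
lemma dual_eq {dual : Fin m → ℤ}
    (hdual : ∀ j : Fin m, dual j.rev =
      2 * k + 1 - lam j +
        ((Finset.univ.filter
          fun i : Fin m => i < j ∧ lam i + lam j ≤ 2 * k + (j : ℤ) - (i : ℤ)).card : ℤ) +
        ((Finset.univ.filter
          fun i : Fin m => j < i ∧ 2 * k + (i : ℤ) - (j : ℤ) < lam i + lam j).card : ℤ))
    (j : Fin m) :
    dual j = (n : ℤ) + k + 1 - Qfun n k lam j + (Cfun n k lam j : ℤ) := by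
  have h := hdual j.rev
  rw [Fin.rev_rev] at h
  rw [h]
  have hC := C_eq_B (n := n) hdec hstrict j
  rw [hC]
  unfold Qfun Pfun Afun
  ring

include hdec hstrict in
lemma C_lb2 (hmk : m + k = n) (hbd : ∀ j, 0 ≤ lam j ∧ lam j ≤ (n + k : ℤ))
    {i j : Fin m} (hij : i < j) (hsum : Qfun n k lam i + Qfun n k lam j ≤ 2 * (n : ℤ)) :
    Qfun n k lam i + Qfun n k lam j - 2 * (n : ℤ) - 1 + ((j : ℤ) - (i : ℤ)) ≤
      (Cfun n k lam j : ℤ) := by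
  have hvij : (i : ℕ) < (j : ℕ) := hij
  have hq1 := q_lb hmk hbd (lam := lam) i
  have hq2 := q_lb hmk hbd (lam := lam) j
  by_cases htriv : Qfun n k lam i + Qfun n k lam j - 2 * (n : ℤ) - 1 + ((j : ℤ) - (i : ℤ)) ≤ 0
  · have : (0 : ℤ) ≤ (Cfun n k lam j : ℤ) := by positivity
    omega
  push_neg at htriv
  -- h0 = i + s - 1 where s = 2n+2-qi-qj ≥ 2
  have hs2 : (2 : ℤ) ≤ 2 * (n : ℤ) + 2 - Qfun n k lam i - Qfun n k lam j := by omega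
  have hlt : (i : ℕ) + (2 * (n : ℤ) + 2 - Qfun n k lam i - Qfun n k lam j).toNat - 1
      < (j : ℕ) := by omega
  have hsub : Finset.Ico
      (⟨(i : ℕ) + (2 * (n : ℤ) + 2 - Qfun n k lam i - Qfun n k lam j).toNat - 1,
        by omega⟩ : Fin m) j ⊆
      (Finset.univ.filter fun h : Fin m =>
        h < j ∧ 2 * (n : ℤ) + 1 < Qfun n k lam h + Qfun n k lam j) := by
    intro h hh
    rw [Finset.mem_Ico] at hh
    obtain ⟨h1, h2⟩ := hh
    simp only [Finset.mem_filter, Finset.mem_univ, true_and]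
    refine ⟨h2, ?_⟩
    have hv1 : (i : ℕ) + (2 * (n : ℤ) + 2 - Qfun n k lam i - Qfun n k lam j).toNat - 1
        ≤ (h : ℕ) := h1
    have hile : i ≤ h := by rw [Fin.le_def]; omega
    have hg := q_gap (n := n) hdec hstrict hile
    have hne : Qfun n k lam h + Qfun n k lam j ≤ 2 * (n : ℤ) ∨
        2 * (n : ℤ) + 2 ≤ Qfun n k lam h + Qfun n k lam j :=
      (q_dichot (n := n) hdec hstrict h2).2
    have hgj := q_gap (n := n) hdec hstrict (le_of_lt h2)
    have hv2 : (h : ℕ) < (j : ℕ) := h2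
    omega
  have hcc := Finset.card_le_card hsub
  rw [Fin.card_Ico] at hcc
  simp only [Fin.val_mk] at hcc
  unfold Cfun
  omega

include hdec hstrict in
lemma C_ub2 {i j : Fin m} (hij : i < j)
    (hsum : 2 * (n : ℤ) + 2 ≤ Qfun n k lam i + Qfun n k lam j) :
    (Cfun n k lam j : ℤ) ≤ ((j : ℤ) - (i : ℤ)) +
      (Qfun n k lam i + Qfun n k lam j - 2 * (n : ℤ) - 2) := by
  have hvij : (i : ℕ) < (j : ℕ) := hij
  have hsub : (Finset.univ.filter fun h : Fin m =>
      h < j ∧ 2 * (n : ℤ) + 1 < Qfun n k lam h + Qfun n k lam j) ⊆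
      Finset.Ico (⟨(i : ℕ) -
        (Qfun n k lam i + Qfun n k lam j - 2 * (n : ℤ) - 2).toNat, by omega⟩ : Fin m) j := by
    intro h hh
    simp only [Finset.mem_filter, Finset.mem_univ, true_and] at hh
    obtain ⟨hhj, hcnt⟩ := hh
    rw [Finset.mem_Ico]
    refine ⟨?_, hhj⟩
    rw [Fin.le_def]
    simp only [Fin.val_mk]
    by_cases hcase : h ≤ i
    · have hg := q_gap (n := n) hdec hstrict hcase
      have hv : (h : ℕ) ≤ (i : ℕ) := hcase
      omega
    · push_neg at hcase
      have hv : (i : ℕ) < (h : ℕ) := hcase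
      omega
  have hcc := Finset.card_le_card hsub
  rw [Fin.card_Ico] at hcc
  simp only [Fin.val_mk] at hcc
  unfold Cfun
  omega

include hdec hstrict in
lemma dual_unrel_iff (hmk : m + k = n) (hbd : ∀ j, 0 ≤ lam j ∧ lam j ≤ (n + k : ℤ))
    {i j : Fin m} (hij : i < j) :
    ((n : ℤ) + k + 1 - Qfun n k lam i + (Cfun n k lam i : ℤ)) +
      ((n : ℤ) + k + 1 - Qfun n k lam j + (Cfun n k lam j : ℤ)) ≤
      2 * k + (j : ℤ) - (i : ℤ) ↔
    2 * (n : ℤ) + 1 < Qfun n k lam i + Qfun n k lam j := by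
  have hvij : (i : ℕ) < (j : ℕ) := hij
  have hd := (q_dichot (n := n) hdec hstrict hij).2
  have hgap := q_gap (n := n) hdec hstrict (le_of_lt hij)
  have hCju := C_ub (n := n) hdec hstrict j
  have hCiu := C_ub (n := n) hdec hstrict i
  have hstr := q_strict (n := n) hdec hstrict hij
  constructor
  · -- dual-unrelated implies q-sum large; contrapositive
    intro hle
    by_contra hc
    push_neg at hc
    have hsum : Qfun n k lam i + Qfun n k lam j ≤ 2 * (n : ℤ) := by omega
    have hlb := C_lb2 (n := n) hdec hstrict hmk hbd hij hsum
    have hCi : (0 : ℤ) ≤ (Cfun n k lam i : ℤ) := by positivity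
    omega
  · intro hsum
    by_cases hqi : Qfun n k lam i ≤ (n : ℤ)
    · have hCi := C_zero (n := n) hdec hstrict hqi
      have hub2 := C_ub2 (n := n) hdec hstrict hij hsum
      omega
    · push_neg at hqi
      have h1 : (Cfun n k lam i : ℤ) ≤ Qfun n k lam i - n - 1 := by omega
      have h2 : (Cfun n k lam j : ℤ) ≤ Qfun n k lam j - n - 1 := by omega
      omega


theorem dual_partition (n m k : ℕ) (hmk : m + k = n)
    (lam : Fin m → ℤ)
    (hdec : ∀ i j : Fin m, i ≤ j → lam j ≤ lam i)
    (hbd : ∀ j, 0 ≤ lam j ∧ lam j ≤ (n + k : ℤ))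
    (hstrict : ∀ i j : Fin m, (i : ℕ) + 1 = (j : ℕ) → (k : ℤ) < lam i → lam j < lam i)
    (dual : Fin m → ℤ)
    (hdual : ∀ j : Fin m, dual j.rev =
      2 * k + 1 - lam j +
        ((Finset.univ.filter
          fun i : Fin m => i < j ∧ lam i + lam j ≤ 2 * k + (j : ℤ) - (i : ℤ)).card : ℤ) +
        ((Finset.univ.filter
          fun i : Fin m => j < i ∧ 2 * k + (i : ℤ) - (j : ℤ) < lam i + lam j).card : ℤ)) :
    ((∀ i j : Fin m, i ≤ j → dual j ≤ dual i) ∧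
     (∀ j, 0 ≤ dual j ∧ dual j ≤ (n + k : ℤ)) ∧
     (∀ i j : Fin m, (i : ℕ) + 1 = (j : ℕ) → (k : ℤ) < dual i → dual j < dual i)) ∧
    (∀ j : Fin m,
      (n + k + 1 : ℤ) - dual j +
        ((Finset.univ.filter
          fun i : Fin m => i < j ∧ dual i + dual j ≤ 2 * k + (j : ℤ) - (i : ℤ)).card : ℤ) =
      2 * n + 1 -
        ((n + k + 1 : ℤ) - lam j.rev +
          ((Finset.univ.filter
            fun i : Fin m => i < j.rev ∧
              lam i + lam j.rev ≤ 2 * k + (j.rev : ℤ) - (i : ℤ)).card : ℤ))) := by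
  have hduq : ∀ j : Fin m, dual j =
      (n : ℤ) + k + 1 - Qfun n k lam j + (Cfun n k lam j : ℤ) :=
    dual_eq (n := n) hdec hstrict hdual
  have hstep : ∀ i j : Fin m, (i : ℕ) + 1 = (j : ℕ) → dual j ≤ dual i := by
    intro i j hij
    have hm := C_mono (n := n) hdec hstrict hij
    rw [hduq i, hduq j]
    omega
  have hmono : ∀ i j : Fin m, i ≤ j → dual j ≤ dual i := by
    intro i j hij
    have hv : (i : ℕ) ≤ (j : ℕ) := hij
    have := mono_aux (fun x => - dual x)
      (fun a b hab => by simpa using hstep a b hab) ((j : ℕ) - (i : ℕ)) i j (by omega)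
    simpa using this
  have hq1j : ∀ j : Fin m, 1 + ((j : ℕ) : ℤ) ≤ Qfun n k lam j := by
    intro j
    have h0 : (⟨0, j.pos⟩ : Fin m) ≤ j := by rw [Fin.le_def]; exact Nat.zero_le _
    have hg := q_gap (n := n) hdec hstrict h0
    have hl := q_lb (n := n) hmk hbd (lam := lam) ⟨0, j.pos⟩
    simp only [Fin.val_mk] at hg
    omega
  have hbds : ∀ j : Fin m, 0 ≤ dual j ∧ dual j ≤ (n + k : ℤ) := by
    intro j
    have hlb := C_lb (n := n) hdec hstrict hmk hbd j
    have hCle := C_le_j (n := n) (k := k) (lam := lam) j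
    have hq := hq1j j
    rw [hduq j]
    constructor <;> push_cast <;> omega
  have hstrictd : ∀ i j : Fin m, (i : ℕ) + 1 = (j : ℕ) →
      (k : ℤ) < dual i → dual j < dual i := by
    intro i j hij hk
    have hiltj : i < j := by rw [Fin.lt_def]; omega
    have hCui := C_ub (n := n) hdec hstrict i
    have hCuj := C_ub (n := n) hdec hstrict j
    have hstr := q_strict (n := n) hdec hstrict hiltj
    rw [hduq i] at hk
    have hqi : Qfun n k lam i ≤ (n : ℤ) := by by_contra hc; push_neg at hc; omega
    have hCi := C_zero (n := n) hdec hstrict hqi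
    by_cases hqj : Qfun n k lam j ≤ (n : ℤ)
    · have hCj := C_zero (n := n) hdec hstrict hqj
      rw [hduq i, hduq j]
      omega
    · push_neg at hqj
      rw [hduq i, hduq j]
      omega
  refine ⟨⟨hmono, hbds, hstrictd⟩, ?_⟩
  intro j
  have hcardeq : (Finset.univ.filter
      fun i : Fin m => i < j ∧ dual i + dual j ≤ 2 * k + (j : ℤ) - (i : ℤ)).card =
      Cfun n k lam j := by
    unfold Cfun
    apply congrArg
    apply Finset.filter_congr
    intro i _
    constructor
    · rintro ⟨hij, hcond⟩
      refine ⟨hij, ?_⟩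
      apply (dual_unrel_iff (n := n) hdec hstrict hmk hbd hij).mp
      rw [← hduq i, ← hduq j]
      exact hcond
    · rintro ⟨hij, hcond⟩
      refine ⟨hij, ?_⟩
      have := (dual_unrel_iff (n := n) hdec hstrict hmk hbd hij).mpr hcond
      rw [← hduq i, ← hduq j] at this
      exact this
  rw [hcardeq, hduq j]
  unfold Qfun Pfun Afun
  push_cast
  ring

end DualPartitionAux

/-- **The dual `k`-strict partition.**  Let `m + k = n` and let `λ ∈ 𝒫(k,n)` be a
`k`-strict partition in the `m × (n+k)` rectangle.  Define `λ^∨` by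
`λ^∨_{m+1−j} = 2k+1−λ_j + #{i<j : λ_i+λ_j ≤ 2k+j−i} + #{i>j : λ_i+λ_j > 2k+i−j}`.
Then `λ^∨ ∈ 𝒫(k,n)` and `p_j(λ^∨) = 2n+1−p_{m+1−j}(λ)` for all `j`, where
`p_j(μ) = n+k+1−μ_j + #{i<j : μ_i+μ_j ≤ 2k+j−i}`. -/
theorem dual_partition (n m k : ℕ) (hmk : m + k = n)
    (lam : Fin m → ℤ)
    (hdec : ∀ i j : Fin m, i ≤ j → lam j ≤ lam i)
    (hbd : ∀ j, 0 ≤ lam j ∧ lam j ≤ (n + k : ℤ))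
    (hstrict : ∀ i j : Fin m, (i : ℕ) + 1 = (j : ℕ) → (k : ℤ) < lam i → lam j < lam i)
    (dual : Fin m → ℤ)
    (hdual : ∀ j : Fin m, dual j.rev =
      2 * k + 1 - lam j +
        ((Finset.univ.filter
          fun i : Fin m => i < j ∧ lam i + lam j ≤ 2 * k + (j : ℤ) - (i : ℤ)).card : ℤ) +
        ((Finset.univ.filter
          fun i : Fin m => j < i ∧ 2 * k + (i : ℤ) - (j : ℤ) < lam i + lam j).card : ℤ)) :
    ((∀ i j : Fin m, i ≤ j → dual j ≤ dual i) ∧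
     (∀ j, 0 ≤ dual j ∧ dual j ≤ (n + k : ℤ)) ∧
     (∀ i j : Fin m, (i : ℕ) + 1 = (j : ℕ) → (k : ℤ) < dual i → dual j < dual i)) ∧
    (∀ j : Fin m,
      (n + k + 1 : ℤ) - dual j +
        ((Finset.univ.filter
          fun i : Fin m => i < j ∧ dual i + dual j ≤ 2 * k + (j : ℤ) - (i : ℤ)).card : ℤ) =
      2 * n + 1 -
        ((n + k + 1 : ℤ) - lam j.rev +
          ((Finset.univ.filter
            fun i : Fin m => i < j.rev ∧
              lam i + lam j.rev ≤ 2 * k + (j.rev : ℤ) - (i : ℤ)).card : ℤ))) :=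
  DualPartitionAux.dual_partition n m k hmk lam hdec hbd hstrict dual hdual
end

section
/- Fix integers 1 ≤ m ≤ n and set k = n+1−m. Let P′ = {p′_1 < ⋯ < p′_m} be a subset of {1,…,2n+2} of cardinality m with p′_i + p′_j ≠ 2n+3 for all i, j, and define λ_j = n+k+1−p′_j if p′_j ≤ n+1, and λ_j = n+k+2−p′_j + #{i < j : p′_i + p′_j > 2n+3} if p′_j > n+1. Then λ = (λ_1,…,λ_m) is a k-strict partition contained in an m × (n+k) rectangle, and for all 1 ≤ i ≤ j ≤ m: (i) λ_j ≤ k if and only if p′_j > n; (ii) λ_j = k and (j = 1 or λ_{j−1} > k) if and only if p′_j ∈ {n+1, n+2}; and (iii) for i < j, λ_i + λ_j ≤ 2k − 1 + j − i if and only if p′_i + p′_j > 2n+3. -/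
private lemma cardle_aux {m : ℕ} (s : Finset (Fin m)) (f : Fin m → ℕ)
    (hf : Function.Injective f) (lo hi : ℕ)
    (h : ∀ x ∈ s, lo ≤ f x ∧ f x ≤ hi) : s.card ≤ hi + 1 - lo := by
  have := Finset.card_le_card_of_injOn f (fun x hx => Finset.mem_Icc.2 (h x hx))
    (fun a _ b _ hab => hf hab)
  simpa [Nat.card_Icc] using this

/-- **Translation between index sets and `k`-strict partitions (type D).**
Let `m + k = n + 1`, and let `P' = {p'_1 < ⋯ < p'_m} ⊆ {1,…,2n+2}` with
`p'_i + p'_j ≠ 2n+3`.  Define `λ_j = n+k+1−p'_j` if `p'_j ≤ n+1` and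
`λ_j = n+k+2−p'_j + #{i<j : p'_i+p'_j > 2n+3}` if `p'_j > n+1`.  Then `λ` is a
`k`-strict partition in the `m × (n+k)` rectangle, and: (i) `λ_j ≤ k ↔ p'_j > n`;
(ii) `λ_j = k ∧ (j = 1 ∨ λ_{j−1} > k) ↔ p'_j ∈ {n+1, n+2}`; (iii) for `i < j`,
`λ_i + λ_j ≤ 2k−1+j−i ↔ p'_i + p'_j > 2n+3`. -/
theorem indexSet_partition_translation_typeD (n m k : ℕ) (hm : 1 ≤ m)
    (hmk : m + k = n + 1)
    (P : Fin m → ℕ) (hmono : StrictMono P)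
    (hrange : ∀ j, 1 ≤ P j ∧ P j ≤ 2 * n + 2)
    (hidx : ∀ i j, P i + P j ≠ 2 * n + 3)
    (lam : Fin m → ℤ)
    (hlam : ∀ j : Fin m, lam j =
      if P j ≤ n + 1 then (n + k + 1 : ℤ) - P j
      else (n + k + 2 : ℤ) - P j +
        ((Finset.univ.filter fun i : Fin m => i < j ∧ 2 * n + 3 < P i + P j).card : ℤ)) :
    ((∀ i j : Fin m, i ≤ j → lam j ≤ lam i) ∧
     (∀ j, 0 ≤ lam j ∧ lam j ≤ (n + k : ℤ)) ∧
     (∀ i j : Fin m, (i : ℕ) + 1 = (j : ℕ) → (k : ℤ) < lam i → lam j < lam i)) ∧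
    (∀ j : Fin m, (lam j ≤ (k : ℤ) ↔ n < P j)) ∧
    (∀ j : Fin m,
      ((lam j = (k : ℤ) ∧ ∀ i : Fin m, (i : ℕ) + 1 = (j : ℕ) → (k : ℤ) < lam i) ↔
        (P j = n + 1 ∨ P j = n + 2))) ∧
    (∀ i j : Fin m, i < j →
      (lam i + lam j ≤ 2 * k - 1 + (j : ℤ) - (i : ℤ) ↔ 2 * n + 3 < P i + P j)) := by
  have hP1 : ∀ j, 1 ≤ P j := fun j => (hrange j).1
  have hP2 : ∀ j, P j ≤ 2 * n + 2 := fun j => (hrange j).2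
  set Q : Fin m → ℕ := fun i => if P i ≤ n + 1 then P i else 2 * n + 3 - P i with hQ
  have hQinj : Function.Injective Q := by
    intro a b h
    have ha2 := hP2 a; have hb2 := hP2 b
    have hab := hidx a b
    apply hmono.injective
    simp only [hQ] at h
    split_ifs at h <;> omega
  -- U1 : upper bound on the count when P j ≥ n+2
  have U1 : ∀ j : Fin m, n + 2 ≤ P j →
      (Finset.univ.filter fun i : Fin m => i < j ∧ 2 * n + 3 < P i + P j).card + n + 2 ≤ P j := by
    intro j hb
    have h : (Finset.univ.filter fun i : Fin m => i < j ∧ 2 * n + 3 < P i + P j).card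
        ≤ (n + 1) + 1 - (2 * n + 4 - P j) := by
      apply cardle_aux _ Q hQinj
      intro x hx
      rw [Finset.mem_filter] at hx
      have hxj : P x < P j := hmono hx.2.1
      have h1 := hx.2.2
      have := hP2 x; have := hP1 x
      simp only [hQ]; split_ifs <;> omega
    have := hP2 j; omega
  -- U2 : lower bound on the count
  have U2 : ∀ j : Fin m, (j : ℕ) + P j ≤
      (Finset.univ.filter fun i : Fin m => i < j ∧ 2 * n + 3 < P i + P j).card + 2 * n + 2 := by
    intro j
    set A := Finset.univ.filter fun i : Fin m => i < j ∧ 2 * n + 3 < P i + P j with hA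
    set B := Finset.univ.filter (fun i : Fin m => i < j ∧ P i + P j ≤ 2 * n + 3) with hBdef
    have hsub : Finset.Iio j ⊆ A ∪ B := by
      intro x hx
      rw [Finset.mem_Iio] at hx
      rw [Finset.mem_union, hA, hBdef, Finset.mem_filter, Finset.mem_filter]
      by_cases h : 2 * n + 3 < P x + P j
      · exact Or.inl ⟨Finset.mem_univ x, hx, h⟩
      · exact Or.inr ⟨Finset.mem_univ x, hx, by omega⟩
    have hBc : B.card ≤ (2 * n + 2 - P j) + 1 - 1 := by
      apply cardle_aux _ P hmono.injective
      intro x hx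
      rw [hBdef, Finset.mem_filter] at hx
      have := hidx x j; have := hP1 x
      omega
    have h1 := Finset.card_le_card hsub
    have h2 := Finset.card_union_le A B
    have hIio : (Finset.Iio j).card = (j : ℕ) := Fin.card_Iio j
    have := hP2 j
    omega
  -- U3 : better upper bound when all earlier entries are ≤ n
  have U3 : ∀ j : Fin m, (∀ x, x < j → P x ≤ n) → n + 3 ≤ P j →
      (Finset.univ.filter fun i : Fin m => i < j ∧ 2 * n + 3 < P i + P j).card + n + 3 ≤ P j := by
    intro j hall hb
    have h : (Finset.univ.filter fun i : Fin m => i < j ∧ 2 * n + 3 < P i + P j).card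
        ≤ n + 1 - (2 * n + 4 - P j) := by
      apply cardle_aux _ P hmono.injective
      intro x hx
      rw [Finset.mem_filter] at hx
      have := hall x hx.2.1
      omega
    have := hP2 j; omega
  -- U4 : upper bound relative to an earlier index i with P i ≤ n+1
  have U4 : ∀ i j : Fin m, i < j → P i ≤ n + 1 → 2 * n + 4 ≤ P i + P j →
      (Finset.univ.filter fun x : Fin m => x < j ∧ 2 * n + 3 < P x + P j).card
        + 2 * n + 4 + (i : ℕ) ≤ P i + P j + (j : ℕ) := by
    intro i j hij hPi hab
    set A := Finset.univ.filter (fun x : Fin m => x < i ∧ 2 * n + 3 < P x + P j) with hA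
    set B := Finset.univ.filter (fun x : Fin m => i ≤ x ∧ x < j) with hBdef
    have hsub : (Finset.univ.filter fun x : Fin m => x < j ∧ 2 * n + 3 < P x + P j) ⊆ A ∪ B := by
      intro x hx
      rw [Finset.mem_filter] at hx
      rw [Finset.mem_union, hA, hBdef, Finset.mem_filter, Finset.mem_filter]
      rcases lt_or_ge x i with h | h
      · exact Or.inl ⟨Finset.mem_univ x, h, hx.2.2⟩
      · exact Or.inr ⟨Finset.mem_univ x, h, hx.2.1⟩
    have hAc : A.card ≤ (P i - 1) + 1 - (2 * n + 4 - P j) := by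
      apply cardle_aux _ Q hQinj
      intro x hx
      rw [hA, Finset.mem_filter] at hx
      have h1 : P x < P i := hmono hx.2.1
      have h2 := hx.2.2
      have := hP2 x; have := hP2 j
      simp only [hQ]; split_ifs <;> omega
    have hBc : B.card ≤ ((j : ℕ) - 1) + 1 - (i : ℕ) := by
      apply cardle_aux _ (fun x => (x : ℕ)) Fin.val_injective
      intro x hx
      rw [hBdef, Finset.mem_filter] at hx
      have h1 : (i : ℕ) ≤ (x : ℕ) := hx.2.1
      have h2 : (x : ℕ) < (j : ℕ) := hx.2.2
      omega
    have h1 := Finset.card_le_card hsub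
    have h2 := Finset.card_union_le A B
    have hij' : (i : ℕ) < (j : ℕ) := hij
    have := hP2 j
    omega
  -- U5 : lower bound relative to an earlier index i
  have U5 : ∀ i j : Fin m, i < j → P i + P j ≤ 2 * n + 2 →
      (j : ℕ) + P i + P j ≤
        (Finset.univ.filter fun x : Fin m => x < j ∧ 2 * n + 3 < P x + P j).card
          + 2 * n + 3 + (i : ℕ) := by
    intro i j hij hab
    set Bpos := (Finset.Ico i j).filter (fun x => 2 * n + 3 < P x + P j) with hBpos
    set Bneg := (Finset.Ico i j).filter (fun x => P x + P j ≤ 2 * n + 3) with hBneg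
    have hsub1 : Bpos ⊆ (Finset.univ.filter fun x : Fin m => x < j ∧ 2 * n + 3 < P x + P j) := by
      intro x hx
      rw [hBpos, Finset.mem_filter, Finset.mem_Ico] at hx
      rw [Finset.mem_filter]
      exact ⟨Finset.mem_univ x, hx.1.2, hx.2⟩
    have hsub2 : Finset.Ico i j ⊆ Bpos ∪ Bneg := by
      intro x hx
      rw [Finset.mem_union, hBpos, hBneg, Finset.mem_filter, Finset.mem_filter]
      by_cases h : 2 * n + 3 < P x + P j
      · exact Or.inl ⟨hx, h⟩
      · exact Or.inr ⟨hx, by omega⟩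
    have hBnegc : Bneg.card ≤ (2 * n + 2 - P j) + 1 - P i := by
      apply cardle_aux _ P hmono.injective
      intro x hx
      rw [hBneg, Finset.mem_filter, Finset.mem_Ico] at hx
      have h1 : P i ≤ P x := hmono.monotone hx.1.1
      have := hidx x j
      omega
    have h1 := Finset.card_le_card hsub1
    have h2 := Finset.card_le_card hsub2
    have h3 := Finset.card_union_le Bpos Bneg
    have hIco : (Finset.Ico i j).card = (j : ℕ) - (i : ℕ) := Fin.card_Ico i j
    have hij' : (i : ℕ) < (j : ℕ) := hij
    omega
  -- U6 : adjacent comparison when P i ≥ n+2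
  have U6 : ∀ i j : Fin m, (j : ℕ) = (i : ℕ) + 1 → n + 2 ≤ P i →
      (Finset.univ.filter fun x : Fin m => x < j ∧ 2 * n + 3 < P x + P j).card + P i ≤
        (Finset.univ.filter fun x : Fin m => x < i ∧ 2 * n + 3 < P x + P i).card + P j := by
    intro i j hj hPi
    have hij : i < j := Fin.lt_def.mpr (by omega)
    have hPij : P i < P j := hmono hij
    set A := Finset.univ.filter (fun x : Fin m => x < i ∧ 2 * n + 3 < P x + P i) with hA
    set D := Finset.univ.filter
      (fun x : Fin m => x < i ∧ 2 * n + 3 < P x + P j ∧ P x + P i ≤ 2 * n + 3) with hD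
    have hsub : (Finset.univ.filter fun x : Fin m => x < j ∧ 2 * n + 3 < P x + P j)
        ⊆ (A ∪ D) ∪ {i} := by
      intro x hx
      rw [Finset.mem_filter] at hx
      rw [Finset.mem_union, Finset.mem_union, Finset.mem_singleton, hA, hD,
        Finset.mem_filter, Finset.mem_filter]
      have hxj : (x : ℕ) < (j : ℕ) := hx.2.1
      rcases Nat.lt_or_ge (x : ℕ) (i : ℕ) with h | h
      · have hxi : x < i := Fin.lt_def.mpr h
        by_cases hc : 2 * n + 3 < P x + P i
        · exact Or.inl (Or.inl ⟨Finset.mem_univ x, hxi, hc⟩)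
        · exact Or.inl (Or.inr ⟨Finset.mem_univ x, hxi, hx.2.2, by omega⟩)
      · exact Or.inr (Fin.ext (by omega))
    have hDc : D.card ≤ (2 * n + 2 - P i) + 1 - (2 * n + 4 - P j) := by
      apply cardle_aux _ P hmono.injective
      intro x hx
      rw [hD, Finset.mem_filter] at hx
      have := hidx x i
      omega
    have h1 := Finset.card_le_card hsub
    have h2 := Finset.card_union_le (A ∪ D) ({i} : Finset (Fin m))
    have h3 := Finset.card_union_le A D
    have h4 : ({i} : Finset (Fin m)).card = 1 := Finset.card_singleton i
    have := hP2 i; have := hP2 j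
    omega
  -- Part (i)
  have hB : ∀ j : Fin m, lam j ≤ (k : ℤ) ↔ n < P j := by
    intro j
    have h := hlam j
    split_ifs at h with hc
    · constructor <;> intro h' <;> omega
    · have h1 := U1 j (by omega)
      constructor <;> intro h' <;> omega
  -- adjacent monotonicity
  have hadj : ∀ i j : Fin m, (j : ℕ) = (i : ℕ) + 1 → lam j ≤ lam i := by
    intro i j hj
    have hij : i < j := Fin.lt_def.mpr (by omega)
    have hPij : P i < P j := hmono hij
    have hi := hlam i; have hjj := hlam j
    split_ifs at hi hjj
    · omega
    · have := U1 j (by omega); omega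
    · omega
    · have := U6 i j hj (by omega); omega
  -- full monotonicity
  have key : ∀ d : ℕ, ∀ i j : Fin m, (j : ℕ) = (i : ℕ) + d → lam j ≤ lam i := by
    intro d
    induction d with
    | zero =>
      intro i j h
      have hji : j = i := Fin.ext (by omega)
      exact le_of_eq (congrArg lam hji)
    | succ d ih =>
      intro i j h
      have hlt : (i : ℕ) + d < m := by have := j.isLt; omega
      have h1 := ih i ⟨(i : ℕ) + d, hlt⟩ rfl
      have h2 := hadj ⟨(i : ℕ) + d, hlt⟩ j (show (j : ℕ) = (i : ℕ) + d + 1 by omega)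
      exact le_trans h2 h1
  have hmono' : ∀ i j : Fin m, i ≤ j → lam j ≤ lam i := by
    intro i j hij
    exact key ((j : ℕ) - (i : ℕ)) i j (by have := Fin.le_def.mp hij; omega)
  -- P grows at least by one per step
  have keyP : ∀ d : ℕ, ∀ i j : Fin m, (j : ℕ) = (i : ℕ) + d → P i + d ≤ P j := by
    intro d
    induction d with
    | zero =>
      intro i j h
      have hji : j = i := Fin.ext (by omega)
      rw [hji]; omega
    | succ d ih =>
      intro i j h
      have hlt : (i : ℕ) + d < m := by have := j.isLt; omega
      have h1 := ih i ⟨(i : ℕ) + d, hlt⟩ rfl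
      have h2 : P ⟨(i : ℕ) + d, hlt⟩ < P j :=
        hmono (Fin.lt_def.mpr (show (i : ℕ) + d < (j : ℕ) by omega))
      omega
  -- bounds
  have hupper : ∀ j : Fin m, lam j ≤ (n + k : ℤ) := by
    intro j
    have hj := hlam j
    split_ifs at hj
    · have := hP1 j; omega
    · have := U1 j (by omega); have := hP2 j; omega
  have hlower : ∀ j : Fin m, 0 ≤ lam j := by
    intro j
    have hmlt : m - 1 < m := by omega
    set jm : Fin m := ⟨m - 1, hmlt⟩ with hjmdef
    have hle : j ≤ jm := Fin.le_def.mpr (show (j : ℕ) ≤ m - 1 by have := j.isLt; omega)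
    have h2 := hmono' j jm hle
    have hjm : (jm : ℕ) = m - 1 := rfl
    have h := hlam jm
    split_ifs at h with hc
    · omega
    · have := U2 jm
      omega
  -- strictness
  have hstrict : ∀ i j : Fin m, (i : ℕ) + 1 = (j : ℕ) → (k : ℤ) < lam i → lam j < lam i := by
    intro i j hij hk
    have hPi : P i ≤ n := by
      by_contra hn
      have := (hB i).mpr (by omega)
      omega
    have hij' : i < j := Fin.lt_def.mpr (by omega)
    have hPij := hmono hij'
    have hi := hlam i; have hj := hlam j
    split_ifs at hi hj
    · omega
    · have := U1 j (by omega); omega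
    · omega
    · omega
  -- Part (ii)
  have hC : ∀ j : Fin m,
      ((lam j = (k : ℤ) ∧ ∀ i : Fin m, (i : ℕ) + 1 = (j : ℕ) → (k : ℤ) < lam i) ↔
        (P j = n + 1 ∨ P j = n + 2)) := by
    intro j
    constructor
    · rintro ⟨h1, h2⟩
      have hj := hlam j
      split_ifs at hj with hc
      · left; omega
      · right
        by_contra hne
        have hb : n + 3 ≤ P j := by omega
        rcases Nat.eq_zero_or_pos (j : ℕ) with h0 | h0
        · have hc0 : (Finset.univ.filter fun i : Fin m =>
              i < j ∧ 2 * n + 3 < P i + P j).card = 0 := by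
            rw [Finset.card_eq_zero, Finset.filter_eq_empty_iff]
            intro x _
            rintro ⟨hlt, -⟩
            have := Fin.lt_def.mp hlt
            omega
          omega
        · have hilt : (j : ℕ) - 1 < m := by have := j.isLt; omega
          set i : Fin m := ⟨(j : ℕ) - 1, hilt⟩ with hidef
          have hki := h2 i (show (j : ℕ) - 1 + 1 = (j : ℕ) by omega)
          have hPi : P i ≤ n := by
            by_contra hn
            have := (hB i).mpr (by omega)
            omega
          have hall : ∀ x, x < j → P x ≤ n := by
            intro x hxj
            have hxi : x ≤ i := Fin.le_def.mpr
              (show (x : ℕ) ≤ (j : ℕ) - 1 by have := Fin.lt_def.mp hxj; omega)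
            have := hmono.monotone hxi
            omega
          have := U3 j hall hb
          omega
    · intro h
      have hj := hlam j
      have hprev : ∀ i : Fin m, (i : ℕ) + 1 = (j : ℕ) → (k : ℤ) < lam i := by
        intro i hi1
        have hij : i < j := Fin.lt_def.mpr (by omega)
        have hPij := hmono hij
        have hne := hidx i j
        have hPi : P i ≤ n := by rcases h with h | h <;> omega
        have hli := hlam i
        rw [if_pos (by omega : P i ≤ n + 1)] at hli
        omega
      refine ⟨?_, hprev⟩
      rcases h with h | h
      · rw [if_pos (by omega : P j ≤ n + 1)] at hj; omega
      · have hc0 : (Finset.univ.filter fun i : Fin m =>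
            i < j ∧ 2 * n + 3 < P i + P j).card = 0 := by
          rw [Finset.card_eq_zero, Finset.filter_eq_empty_iff]
          intro x _
          rintro ⟨hxj, hxs⟩
          have := hmono hxj
          have := hidx x j
          omega
        rw [if_neg (by omega : ¬ P j ≤ n + 1)] at hj
        omega
  -- Part (iii)
  have hD' : ∀ i j : Fin m, i < j →
      (lam i + lam j ≤ 2 * k - 1 + (j : ℤ) - (i : ℤ) ↔ 2 * n + 3 < P i + P j) := by
    intro i j hij
    have hij' : (i : ℕ) < (j : ℕ) := Fin.lt_def.mp hij
    have hPij := hmono hij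
    have hi := hlam i; have hj := hlam j
    split_ifs at hi hj
    · have hstep := keyP ((j : ℕ) - (i : ℕ)) i j (by omega)
      constructor <;> intro h' <;> omega
    · by_cases hab : 2 * n + 3 < P i + P j
      · have := U4 i j hij (by omega) (by omega)
        constructor <;> intro h' <;> omega
      · have hne := hidx i j
        have := U5 i j hij (by omega)
        constructor <;> intro h' <;> omega
    · exact absurd hPij (by omega)
    · have h1 := U1 i (by omega); have h2 := U1 j (by omega)
      constructor <;> intro h' <;> omega
  exact ⟨⟨hmono', fun j => ⟨hlower j, hupper j⟩, hstrict⟩, hB, hC, hD'⟩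
end

section
/- Fix integers 1 ≤ k ≤ n and set m = n+1−k. Define a typed k-strict partition to be a pair (λ, t) where λ is a k-strict partition and t ∈ {0,1,2}, subject to: t = 0 if and only if no part of λ equals k (so t ∈ {1,2} exactly when some part of λ equals k). Then the number of typed k-strict partitions (λ, t) with λ contained in an m × (n+k) rectangle equals 2^m · binom(n+1, k). -/
namespace TypedKStrict


def PartT (m N : ℕ) := {f : Fin m → ℕ // (∀ i j : Fin m, i ≤ j → f j ≤ f i) ∧ ∀ i : Fin m, f i ≤ N}

instance (m N : ℕ) : Finite (PartT m N) := by
  apply Finite.of_injective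
    (fun f : PartT m N => (fun i => (⟨f.1 i, Nat.lt_succ_of_le (f.2.2 i)⟩ : Fin (N+1)) : Fin m → Fin (N+1)))
  intro f g h
  apply Subtype.ext
  funext i
  exact congrArg Fin.val (congrFun h i)

noncomputable def P (m N : ℕ) : ℕ := Nat.card (PartT m N)

lemma P_zero_left (N : ℕ) : P 0 N = 1 := by
  rw [P, Nat.card_eq_one_iff_unique]
  refine ⟨⟨fun f g => ?_⟩, ⟨⟨fun i => i.elim0, fun i => i.elim0, fun i => i.elim0⟩⟩⟩
  apply Subtype.ext; funext i; exact i.elim0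

lemma P_zero_right (m : ℕ) : P m 0 = 1 := by
  rw [P, Nat.card_eq_one_iff_unique]
  refine ⟨⟨fun f g => ?_⟩, ⟨⟨fun _ => 0, fun i j _ => le_refl 0, fun i => le_refl 0⟩⟩⟩
  apply Subtype.ext; funext i
  have := f.2.2 i; have := g.2.2 i; omega

def partRecEquiv (m N : ℕ) : PartT (m+1) (N+1) ≃ PartT m (N+1) ⊕ PartT (m+1) N where
  toFun f := if h : f.1 (Fin.last m) = 0 then
      Sum.inl ⟨Fin.init f.1, fun i j hij => f.2.1 _ _ (by simpa using hij),
        fun i => f.2.2 _⟩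
    else
      Sum.inr ⟨fun i => f.1 i - 1,
        fun i j hij => Nat.sub_le_sub_right (f.2.1 i j hij) 1,
        fun i => by have := f.2.2 i; show f.1 i - 1 ≤ N; omega⟩
  invFun s := match s with
    | .inl g => ⟨Fin.snoc g.1 0, by
        refine ⟨fun i j hij => ?_, fun i => ?_⟩
        · rcases Fin.eq_castSucc_or_eq_last j with ⟨j', rfl⟩ | rfl
          · rcases Fin.eq_castSucc_or_eq_last i with ⟨i', rfl⟩ | rfl
            · simpa using g.2.1 i' j' (by simpa using hij)
            · exfalso; have := j'.isLt; simp [Fin.le_def] at hij; omega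
          · simp
        · rcases Fin.eq_castSucc_or_eq_last i with ⟨i', rfl⟩ | rfl
          · simpa using g.2.2 i'
          · simp⟩
    | .inr g => ⟨fun i => g.1 i + 1,
        ⟨fun i j hij => Nat.add_le_add_right (g.2.1 i j hij) 1,
         fun i => Nat.add_le_add_right (g.2.2 i) 1⟩⟩
  left_inv f := by
    by_cases h : f.1 (Fin.last m) = 0
    · simp only [dif_pos h]
      apply Subtype.ext
      show Fin.snoc (Fin.init f.1) 0 = f.1
      rw [← h]
      exact Fin.snoc_init_self f.1
    · simp only [dif_neg h]
      apply Subtype.ext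
      funext i
      show f.1 i - 1 + 1 = f.1 i
      have h1 : 1 ≤ f.1 (Fin.last m) := Nat.one_le_iff_ne_zero.2 h
      have h2 := f.2.1 i (Fin.last m) (Fin.le_last i)
      omega
  right_inv s := by
    match s with
    | .inl g =>
      have h0 : (Fin.snoc g.1 0 : Fin (m+1) → ℕ) (Fin.last m) = 0 := by simp
      simp only [dif_pos h0]
      congr 1
      apply Subtype.ext
      funext i
      simp
    | .inr g =>
      have h0 : ¬ ((fun i => g.1 i + 1) (Fin.last m) = 0) := by simp
      simp only [dif_neg h0]
      congr 1

lemma P_rec (m N : ℕ) : P (m+1) (N+1) = P m (N+1) + P (m+1) N := by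
  rw [P, Nat.card_congr (partRecEquiv m N), Nat.card_sum]; rfl

lemma P_eq : ∀ m N, P m N = (m+N).choose N
  | 0, N => by simp [P_zero_left]
  | m+1, 0 => by simp [P_zero_right]
  | m+1, N+1 => by
    rw [P_rec, P_eq m (N+1), P_eq (m+1) N]
    have e1 : m + 1 + (N + 1) = (m + (N+1)) + 1 := by ring
    have e2 : m + 1 + N = m + (N+1) := by ring
    rw [e1, e2, Nat.choose_succ_succ (m + (N+1)) N, Nat.add_comm]



def TypedT (k m N : ℕ) := {p : (Fin m → ℕ) × Fin 3 //
    (∀ i j : Fin m, i ≤ j → p.1 j ≤ p.1 i) ∧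
    (∀ i : Fin m, p.1 i ≤ N) ∧
    (∀ i j : Fin m, (i : ℕ) + 1 = (j : ℕ) → k < p.1 i → p.1 j < p.1 i) ∧
    ((p.2 : ℕ) = 0 ↔ ∀ i : Fin m, p.1 i ≠ k)}

instance (k m N : ℕ) : Finite (TypedT k m N) := by
  apply Finite.of_injective
    (fun p : TypedT k m N =>
      ((fun i => (⟨p.1.1 i, Nat.lt_succ_of_le (p.2.2.1 i)⟩ : Fin (N+1))), p.1.2))
  intro p q h
  apply Subtype.ext
  have h1 := congrArg Prod.fst h
  have h2 := congrArg Prod.snd h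
  refine Prod.ext ?_ h2
  funext i
  exact congrArg Fin.val (congrFun h1 i)

noncomputable def G (k m N : ℕ) : ℕ := Nat.card (TypedT k m N)

lemma G_zero (k N : ℕ) : G k 0 N = 1 := by
  rw [G, Nat.card_eq_one_iff_unique]
  constructor
  · refine ⟨fun p q => ?_⟩
    apply Subtype.ext
    refine Prod.ext (by funext i; exact i.elim0) ?_
    have hp : (p.1.2 : ℕ) = 0 := p.2.2.2.2.2 (fun i => i.elim0)
    have hq : (q.1.2 : ℕ) = 0 := q.2.2.2.2.2 (fun i => i.elim0)
    exact Fin.ext (by omega)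
  · refine ⟨⟨(fun i => i.elim0, ⟨0, by omega⟩),
      fun i => i.elim0, fun i => i.elim0, fun i => i.elim0,
      ⟨fun _ => (fun i => i.elim0), fun _ => rfl⟩⟩⟩

lemma consval' {m N : ℕ} (g : Fin m → ℕ) (v : ℕ) (h : v + 1 < m + 1) :
    (Fin.cons (N+1) g : Fin (m+1) → ℕ) ⟨v+1, h⟩ = g ⟨v, by omega⟩ := by
  show (Fin.cons (N+1) g : Fin (m+1) → ℕ) (Fin.succ ⟨v, by omega⟩) = _
  rw [Fin.cons_succ]

lemma consval {m N : ℕ} (g : Fin m → ℕ) (i : Fin (m+1)) (hv : (i : ℕ) ≠ 0) :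
    (Fin.cons (N+1) g : Fin (m+1) → ℕ) i = g ⟨(i : ℕ) - 1, by have := i.isLt; omega⟩ := by
  obtain ⟨v, hvlt⟩ := i
  cases v with
  | zero => exact absurd rfl hv
  | succ v' =>
    rw [consval' g v' hvlt]
    apply congrArg
    apply Fin.ext
    simp

/-- strip off the largest part when it equals `N+1 > k` -/
def recEquiv (k m N : ℕ) (hkN : k ≤ N) :
    TypedT k (m+1) (N+1) ≃ TypedT k (m+1) N ⊕ TypedT k m N where
  toFun p :=
    if h : p.1.1 0 = N + 1 then
      Sum.inr ⟨(Fin.tail p.1.1, p.1.2), by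
        obtain ⟨⟨f, t⟩, ha, hb, hc, hd⟩ := p
        simp only at h ha hb hc hd ⊢
        have hlt : ∀ i : Fin m, f i.succ ≤ N := by
          intro i
          have hone : (1 : ℕ) < m + 1 := by have := i.isLt; omega
          have h1 : f ⟨1, hone⟩ < f 0 := hc 0 ⟨1, hone⟩ rfl (by omega)
          have h2 : f i.succ ≤ f ⟨1, hone⟩ := ha ⟨1, hone⟩ i.succ (by
            simp [Fin.le_def])
          omega
        refine ⟨fun i j hij => ha i.succ j.succ (by simpa using hij),
          fun i => hlt i,
          fun i j hij hki => hc i.succ j.succ (by simpa using hij) hki, ?_⟩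
        rw [hd]
        constructor
        · intro hall i; exact hall i.succ
        · intro hall i
          refine Fin.cases ?_ (fun i' => hall i') i
          omega
        ⟩
    else
      Sum.inl ⟨p.1, by
        obtain ⟨⟨f, t⟩, ha, hb, hc, hd⟩ := p
        simp only at h ha hb hc hd ⊢
        have h0 : f 0 ≤ N := by have := hb 0; omega
        exact ⟨ha, fun i => le_trans (ha 0 i (Fin.zero_le i)) h0, hc, hd⟩⟩
  invFun s := match s with
    | .inl q => ⟨q.1, q.2.1, fun i => le_trans (q.2.2.1 i) (by omega), q.2.2.2⟩
    | .inr q => ⟨(Fin.cons (N+1) q.1.1, q.1.2), by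
        obtain ⟨⟨g, t⟩, ha, hb, hc, hd⟩ := q
        simp only at ha hb hc hd ⊢
        refine ⟨?_, ?_, ?_, ?_⟩
        · intro i j hij
          by_cases hj : (j : ℕ) = 0
          · have hi : (i : ℕ) = 0 := by have := Fin.le_def.mp hij; omega
            have : i = j := Fin.ext (by omega)
            rw [this]
          · rw [consval g j hj]
            by_cases hi : (i : ℕ) = 0
            · have : i = 0 := Fin.ext hi
              rw [this, Fin.cons_zero]
              exact le_trans (hb _) (by omega)
            · rw [consval g i hi]
              exact ha _ _ (by simp [Fin.le_def]; have := Fin.le_def.mp hij; omega)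
        · intro i
          by_cases hi : (i : ℕ) = 0
          · have : i = 0 := Fin.ext hi
            rw [this, Fin.cons_zero]
          · rw [consval g i hi]
            exact le_trans (hb _) (by omega)
        · intro i j hij hki
          have hj : (j : ℕ) ≠ 0 := by omega
          rw [consval g j hj]
          by_cases hi : (i : ℕ) = 0
          · have : i = 0 := Fin.ext hi
            rw [this, Fin.cons_zero]
            exact lt_of_le_of_lt (hb _) (by omega)
          · rw [consval g i hi] at hki ⊢
            refine hc _ _ ?_ hki
            simp; omega
        · rw [hd]
          constructor
          · intro hall i
            by_cases hi : (i : ℕ) = 0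
            · have : i = 0 := Fin.ext hi
              rw [this, Fin.cons_zero]
              omega
            · rw [consval g i hi]
              exact hall _
          · intro hall i
            have := hall i.succ
            rwa [Fin.cons_succ] at this⟩
  left_inv p := by
    by_cases h : p.1.1 0 = N + 1
    · simp only [dif_pos h]
      apply Subtype.ext
      show (Fin.cons (N+1) (Fin.tail p.1.1), p.1.2) = p.1
      have hct : Fin.cons (p.1.1 0) (Fin.tail p.1.1) = p.1.1 := Fin.cons_self_tail _
      rw [h] at hct
      rw [hct]
    · simp only [dif_neg h]
      apply Subtype.ext
      rfl
  right_inv s := by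
    match s with
    | .inl q =>
      have h0 : ¬ (q.1.1 0 = N + 1) := by have := q.2.2.1 0; omega
      simp only [dif_neg h0]
      exact congrArg Sum.inl (Subtype.ext rfl)
    | .inr q =>
      have h0 : (Fin.cons (N+1) q.1.1 : Fin (m+1) → ℕ) 0 = N + 1 := by simp
      simp only [dif_pos h0]
      refine congrArg Sum.inr (Subtype.ext ?_)
      refine Prod.ext ?_ rfl
      funext i
      show (Fin.cons (N+1) q.1.1 : Fin (m+1) → ℕ) i.succ = q.1.1 i
      rw [Fin.cons_succ]

lemma G_rec (k m N : ℕ) (hkN : k ≤ N) :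
    G k (m+1) (N+1) = G k (m+1) N + G k m N := by
  rw [G, Nat.card_congr (recEquiv k m N hkN), Nat.card_sum]; rfl


/-- base case `N = K+1 = k`: split by whether some part equals `k` -/
def baseEquiv (K m : ℕ) :
    TypedT (K+1) (m+1) (K+1) ≃ PartT (m+1) K ⊕ (Bool × PartT m (K+1)) where
  toFun p :=
    if h : p.1.1 0 = K + 1 then
      Sum.inr (decide (p.1.2 = 1), ⟨Fin.tail p.1.1, by
        obtain ⟨⟨f, t⟩, ha, hb, hc, hd⟩ := p
        simp only at h ha hb hc hd ⊢
        exact ⟨fun i j hij => ha i.succ j.succ (by simpa using hij),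
          fun i => hb i.succ⟩⟩)
    else
      Sum.inl ⟨p.1.1, by
        obtain ⟨⟨f, t⟩, ha, hb, hc, hd⟩ := p
        simp only at h ha hb hc hd ⊢
        have h0 : f 0 ≤ K := by have := hb 0; omega
        exact ⟨ha, fun i => le_trans (ha 0 i (Fin.zero_le i)) h0⟩⟩
  invFun s := match s with
    | .inl g => ⟨(g.1, 0), by
        obtain ⟨g, ha, hb⟩ := g
        simp only
        refine ⟨ha, fun i => le_trans (hb i) (by omega), ?_, ?_⟩
        · intro i j hij hki
          have := hb i; omega
        · constructor
          · intro _ i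
            have := hb i; omega
          · intro _; rfl⟩
    | .inr bg => ⟨(Fin.cons (K+1) bg.2.1, if bg.1 then 1 else 2), by
        obtain ⟨b, g, ha, hb⟩ := bg
        simp only
        refine ⟨?_, ?_, ?_, ?_⟩
        · intro i j hij
          by_cases hj : (j : ℕ) = 0
          · have hi : (i : ℕ) = 0 := by have := Fin.le_def.mp hij; omega
            have : i = j := Fin.ext (by omega)
            rw [this]
          · rw [consval g j hj]
            by_cases hi : (i : ℕ) = 0
            · have : i = 0 := Fin.ext hi
              rw [this, Fin.cons_zero]
              exact hb _
            · rw [consval g i hi]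
              exact ha _ _ (by simp [Fin.le_def]; have := Fin.le_def.mp hij; omega)
        · intro i
          by_cases hi : (i : ℕ) = 0
          · have : i = 0 := Fin.ext hi
            rw [this, Fin.cons_zero]
          · rw [consval g i hi]
            exact hb _
        · intro i j hij hki
          exfalso
          by_cases hi : (i : ℕ) = 0
          · have : i = 0 := Fin.ext hi
            rw [this, Fin.cons_zero] at hki
            omega
          · rw [consval g i hi] at hki
            have := hb ⟨(i : ℕ) - 1, by have := i.isLt; omega⟩
            omega
        · constructor
          · intro h0
            exfalso
            cases b <;> simp at h0
          · intro hall
            exfalso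
            have := hall 0
            rw [Fin.cons_zero] at this
            exact this rfl⟩
  left_inv p := by
    by_cases h : p.1.1 0 = K + 1
    · simp only [dif_pos h]
      apply Subtype.ext
      have hne : (p.1.2 : ℕ) ≠ 0 := by
        intro h0
        have := p.2.2.2.2.1 h0 0
        exact this h
      have hct : Fin.cons (p.1.1 0) (Fin.tail p.1.1) = p.1.1 := Fin.cons_self_tail _
      rw [h] at hct
      show (Fin.cons (K+1) (Fin.tail p.1.1), if decide (p.1.2 = 1) then 1 else 2) = p.1
      rw [hct]
      refine Prod.ext rfl ?_
      show (if decide (p.1.2 = 1) then (1 : Fin 3) else 2) = p.1.2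
      by_cases h1 : p.1.2 = 1
      · simp [h1]
      · have hv1 : (p.1.2 : ℕ) ≠ 1 := fun hv => h1 (Fin.ext hv)
        have hlt := p.1.2.isLt
        have hv2 : (p.1.2 : ℕ) = 2 := by omega
        simp only [h1, decide_eq_false, if_neg]
        · exact (Fin.ext hv2.symm : (2 : Fin 3) = p.1.2).symm ▸ rfl
    · simp only [dif_neg h]
      apply Subtype.ext
      have h0 : ∀ i, p.1.1 i ≠ K + 1 := by
        intro i hi
        have h2 := p.2.1 0 i (Fin.zero_le i)
        have h3 := p.2.2.1 0
        omega
      have ht : (p.1.2 : ℕ) = 0 := p.2.2.2.2.2 h0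
      show (p.1.1, (0 : Fin 3)) = p.1
      refine Prod.ext rfl ?_
      exact (Fin.ext ht.symm : (0 : Fin 3) = p.1.2) ▸ rfl
  right_inv s := by
    match s with
    | .inl g =>
      have h0 : ¬ (g.1 0 = K + 1) := by have := g.2.2 0; omega
      simp only [dif_neg h0]
      exact congrArg Sum.inl (Subtype.ext rfl)
    | .inr bg =>
      obtain ⟨b, g⟩ := bg
      have h0 : (Fin.cons (K+1) g.1 : Fin (m+1) → ℕ) 0 = K + 1 := by simp
      simp only [dif_pos h0]
      refine congrArg Sum.inr (Prod.ext ?_ (Subtype.ext ?_))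
      · show decide ((if b then (1 : Fin 3) else 2) = 1) = b
        cases b <;> simp
      · funext i
        show (Fin.cons (K+1) g.1 : Fin (m+1) → ℕ) i.succ = g.1 i
        rw [Fin.cons_succ]

lemma two_mul_card_bool (X : Type*) [Finite X] : Nat.card (Bool × X) = 2 * Nat.card X := by
  rw [Nat.card_prod]
  simp [Nat.card_eq_fintype_card]

lemma G_base (K m : ℕ) : G (K+1) (m+1) (K+1) = P (m+1) K + 2 * P m (K+1) := by
  rw [G, Nat.card_congr (baseEquiv K m), Nat.card_sum, two_mul_card_bool]; rfl

lemma G_base_val (K : ℕ) : ∀ a, G (K+1) a (K+1) = (a+K).choose K + 2 * ((a+K).choose (K+1))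
  | 0 => by
    rw [G_zero]
    have h1 : (0+K).choose K = 1 := by simp
    have h2 : (0+K).choose (K+1) = 0 := by
      apply Nat.choose_eq_zero_of_lt; omega
    omega
  | a+1 => by
    rw [G_base, P_eq, P_eq]
    have e1 : a + (K + 1) = a + 1 + K := by ring
    rw [e1]

lemma sum_pascal (B : ℕ → ℕ) (d m : ℕ) :
    ∑ j ∈ Finset.range (m+2), (d+1).choose j * B (m+1-j)
      = ∑ j ∈ Finset.range (m+2), d.choose j * B (m+1-j)
        + ∑ j ∈ Finset.range (m+1), d.choose j * B (m-j) := by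
  rw [Finset.sum_range_succ' (fun j => (d+1).choose j * B (m+1-j)) (m+1),
      Finset.sum_range_succ' (fun j => d.choose j * B (m+1-j)) (m+1)]
  simp only [Nat.succ_sub_succ_eq_sub, Nat.add_sub_add_right, Nat.choose_succ_succ,
    Nat.choose_zero_right, one_mul, Nat.sub_zero, add_mul]
  rw [Finset.sum_add_distrib]
  ring

lemma G_sum (K : ℕ) : ∀ d m, G (K+1) m (K+1+d)
    = ∑ j ∈ Finset.range (m+1), Nat.choose d j * G (K+1) (m-j) (K+1)
  | 0, m => by
    have h1 : ∀ b ∈ Finset.range (m+1), b ≠ 0 →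
        Nat.choose 0 b * G (K+1) (m-b) (K+1) = 0 := by
      intro b _ hb0
      cases b with
      | zero => omega
      | succ b' => simp
    have h2 : 0 ∉ Finset.range (m+1) →
        Nat.choose 0 0 * G (K+1) (m-0) (K+1) = 0 := by
      intro h; exact absurd (Finset.mem_range.mpr (by omega)) h
    rw [Finset.sum_eq_single 0 h1 h2]
    simp
  | d+1, 0 => by
    simp [G_zero]
  | d+1, m+1 => by
    have e : K+1+(d+1) = (K+1+d)+1 := by ring
    rw [e, G_rec (K+1) m (K+1+d) (by omega), G_sum K d (m+1), G_sum K d m]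
    exact (sum_pascal (fun a => G (K+1) a (K+1)) d m).symm

lemma trinom (n r : ℕ) (h : r ≤ n) :
    ∑ j ∈ Finset.range (r+1), n.choose j * (n-j).choose (r-j) = 2^r * n.choose r := by
  have hterm : ∀ j ∈ Finset.range (r+1), n.choose j * (n-j).choose (r-j)
      = n.choose r * r.choose j := by
    intro j hj
    have hj' : j ≤ r := by
      have := Finset.mem_range.mp hj; omega
    exact (Nat.choose_mul (n := n) hj').symm
  rw [Finset.sum_congr rfl hterm, ← Finset.mul_sum, Nat.sum_range_choose, mul_comm]

end TypedKStrict

open TypedKStrict in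
/-- **Rank of `H^*(OG(n+1−k,2n+2))` as a count of typed `k`-strict partitions.** -/
theorem card_typed_kStrict_partitions (n k : ℕ) (hk₁ : 1 ≤ k) (hk₂ : k ≤ n) :
    Nat.card {p : (Fin (n + 1 - k) → ℕ) × Fin 3 //
        (∀ i j : Fin (n + 1 - k), i ≤ j → p.1 j ≤ p.1 i) ∧
        (∀ i : Fin (n + 1 - k), p.1 i ≤ n + k) ∧
        (∀ i j : Fin (n + 1 - k), (i : ℕ) + 1 = (j : ℕ) → k < p.1 i → p.1 j < p.1 i) ∧
        ((p.2 : ℕ) = 0 ↔ ∀ i : Fin (n + 1 - k), p.1 i ≠ k)} =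
      2 ^ (n + 1 - k) * (n + 1).choose k := by
  show G k (n+1-k) (n+k) = 2^(n+1-k) * (n+1).choose k
  obtain ⟨K, rfl⟩ : ∃ K, k = K + 1 := ⟨k - 1, by omega⟩
  obtain ⟨m', rfl⟩ : ∃ m', n = K + 1 + m' := ⟨n - (K + 1), by omega⟩
  have hsub : K + 1 + m' + 1 - (K + 1) = m' + 1 := by omega
  rw [hsub]
  have e : K + 1 + m' + (K + 1) = K + 1 + (K + m' + 1) := by ring
  rw [e, G_sum K (K+m'+1) (m'+1)]
  show _ = 2^(m'+1) * (K+1+m'+1).choose (K+1)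
  have hstep : ∀ j ∈ Finset.range (m'+2), (K+m'+1).choose j * G (K+1) (m'+1-j) (K+1)
      = (K+m'+1).choose j * (K+m'+1-j).choose K
        + 2 * ((K+m'+1).choose j * (K+m'+1-j).choose (K+1)) := by
    intro j hj
    have hj' : j ≤ m'+1 := by have := Finset.mem_range.mp hj; omega
    rw [G_base_val K (m'+1-j)]
    have hx : m'+1-j+K = K+m'+1-j := by omega
    rw [hx]
    ring
  rw [Finset.sum_congr rfl hstep, Finset.sum_add_distrib, ← Finset.mul_sum]
  have hA : ∑ j ∈ Finset.range (m'+2), (K+m'+1).choose j * (K+m'+1-j).choose K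
      = 2^(m'+1) * (K+m'+1).choose (m'+1) := by
    have hterm : ∀ j ∈ Finset.range (m'+2), (K+m'+1).choose j * (K+m'+1-j).choose K
        = (K+m'+1).choose j * (K+m'+1-j).choose (m'+1-j) := by
      intro j hj
      have hj' : j ≤ m'+1 := by have := Finset.mem_range.mp hj; omega
      congr 1
      rw [← Nat.choose_symm (show K ≤ K+m'+1-j by omega)]
      congr 1
      omega
    rw [Finset.sum_congr rfl hterm]
    exact trinom (K+m'+1) (m'+1) (by omega)
  have hB : ∑ j ∈ Finset.range (m'+2), (K+m'+1).choose j * (K+m'+1-j).choose (K+1)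
      = 2^m' * (K+m'+1).choose m' := by
    rw [Finset.sum_range_succ]
    have hlast : (K+m'+1-(m'+1)).choose (K+1) = 0 := by
      have hx : K+m'+1-(m'+1) = K := by omega
      rw [hx]
      exact Nat.choose_eq_zero_of_lt (by omega)
    rw [hlast, mul_zero, add_zero]
    have hterm : ∀ j ∈ Finset.range (m'+1), (K+m'+1).choose j * (K+m'+1-j).choose (K+1)
        = (K+m'+1).choose j * (K+m'+1-j).choose (m'-j) := by
      intro j hj
      have hj' : j ≤ m' := by have := Finset.mem_range.mp hj; omega
      congr 1
      rw [← Nat.choose_symm (show K+1 ≤ K+m'+1-j by omega)]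
      congr 1
      omega
    rw [Finset.sum_congr rfl hterm]
    exact trinom (K+m'+1) m' (by omega)
  rw [hA, hB]
  have hfin : (K+m'+1).choose (m'+1) + (K+m'+1).choose m' = (K+1+m'+1).choose (K+1) := by
    have h1 : (K+m'+1+1).choose (m'+1) = (K+m'+1).choose m' + (K+m'+1).choose (m'+1) :=
      Nat.choose_succ_succ _ _
    have h2 : (K+m'+1+1).choose (K+1) = (K+m'+1+1).choose (m'+1) := by
      rw [← Nat.choose_symm (show m'+1 ≤ K+m'+1+1 by omega)]
      congr 1
      omega
    have h3 : K+1+m'+1 = K+m'+1+1 := by ring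
    rw [h3, h2, h1]
    omega
  calc 2^(m'+1) * (K+m'+1).choose (m'+1) + 2 * (2^m' * (K+m'+1).choose m')
      = 2^(m'+1) * ((K+m'+1).choose (m'+1) + (K+m'+1).choose m') := by ring
    _ = 2^(m'+1) * (K+1+m'+1).choose (K+1) := by rw [hfin]
end
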